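/- arXiv:2004.05287 — 3 statements merged into one kernel-verified Lean document; each statement's English description precedes it below -/
import Mathlib

section
/- Let X be a discrete inverse category and X̃ its Cartesian completion. For each object X, the morphism [Δ_X] : X → X⊗X of X̃ represented by the pair (Δ_X;(coherence X⊗X → (X⊗X)⊗I), I) is counital, with counit the morphism ε_X : X → I of X̃ represented by the pair ((coherence X → I⊗X), X): that is, [Δ_X];(ε_X ⊗ id_X) = id_X = [Δ_X];(id_X ⊗ ε_X) in X̃. In particular the chosen semi-Frobenius structure of X induces a counital (special commutative) Frobenius structure on every object of X̃. -/
open CategoryTheory MonoidalCategory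

universe v u

/-- A restriction category: a category equipped with a restriction operator
sending `f : A ⟶ B` to `f̄ : A ⟶ A`, satisfying (R1)–(R4).
Composition `f ≫ g` is diagrammatic (`f` then `g`). -/
class RestrictionCategory (C : Type u) [Category.{v} C] where
  rst : ∀ {A B : C}, (A ⟶ B) → (A ⟶ A)
  rst_comp : ∀ {A B : C} (f : A ⟶ B), rst f ≫ f = f
  rst_comm : ∀ {A B B' : C} (f : A ⟶ B) (g : A ⟶ B'), rst f ≫ rst g = rst g ≫ rst f
  rst_rst : ∀ {A B B' : C} (f : A ⟶ B) (g : A ⟶ B'), rst (rst f ≫ g) = rst f ≫ rst g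
  comp_rst : ∀ {A B B' : C} (f : A ⟶ B) (g : B ⟶ B'), f ≫ rst g = rst (f ≫ g) ≫ f

/-- An inverse category: a restriction category in which every morphism is a
partial isomorphism; `pinv f` is the partial inverse `f°`. -/
class InverseCategory (C : Type u) [Category.{v} C] extends RestrictionCategory C where
  pinv : ∀ {A B : C}, (A ⟶ B) → (B ⟶ A)
  comp_pinv : ∀ {A B : C} (f : A ⟶ B), f ≫ pinv f = rst f
  pinv_comp : ∀ {A B : C} (f : A ⟶ B), pinv f ≫ f = rst (pinv f)

open RestrictionCategory InverseCategory

/-- The "middle-four" interchange map `(A⊗B)⊗(A'⊗B') ⟶ (A⊗A')⊗(B⊗B')`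
(i.e. `id ⊗ σ ⊗ id` with coherence made explicit). -/
def midSwap (C : Type u) [Category.{v} C] [MonoidalCategory C] [SymmetricCategory C]
    (A B A' B' : C) : (A ⊗ B) ⊗ (A' ⊗ B') ⟶ (A ⊗ A') ⊗ (B ⊗ B') :=
  (α_ A B (A' ⊗ B')).hom ≫
    (𝟙 A ⊗ₘ ((α_ B A' B').inv ≫ ((β_ B A').hom ⊗ₘ 𝟙 B') ≫ (α_ A' B B').hom)) ≫
      (α_ A A' (B ⊗ B')).inv

/-- A discrete inverse category: a symmetric monoidal inverse category whose
tensor preserves restriction in each argument, equipped with a chosen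
coassociative, cocommutative, natural comultiplication `Δ_X : X ⟶ X ⊗ X`
whose partial inverse `∇_X := (Δ_X)°` satisfies the (semi-)Frobenius and
specialness laws, compatibly with the tensor. -/
class DiscreteInverseCategory (C : Type u) [Category.{v} C] [MonoidalCategory C]
    [SymmetricCategory C] extends InverseCategory C where
  rst_tensor : ∀ {A B A' B' : C} (f : A ⟶ B) (g : A' ⟶ B'), rst (f ⊗ₘ g) = rst f ⊗ₘ rst g
  Δ : ∀ X : C, X ⟶ X ⊗ X
  Δ_coassoc : ∀ X : C, Δ X ≫ (Δ X ⊗ₘ 𝟙 X) ≫ (α_ X X X).hom = Δ X ≫ (𝟙 X ⊗ₘ Δ X)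
  Δ_cocomm : ∀ X : C, Δ X ≫ (β_ X X).hom = Δ X
  Δ_natural : ∀ {X Y : C} (f : X ⟶ Y), f ≫ Δ Y = Δ X ≫ (f ⊗ₘ f)
  frobenius : ∀ X : C,
    pinv (Δ X) ≫ Δ X = (𝟙 X ⊗ₘ Δ X) ≫ (α_ X X X).inv ≫ (pinv (Δ X) ⊗ₘ 𝟙 X)
  frobenius' : ∀ X : C,
    pinv (Δ X) ≫ Δ X = (Δ X ⊗ₘ 𝟙 X) ≫ (α_ X X X).hom ≫ (𝟙 X ⊗ₘ pinv (Δ X))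
  special : ∀ X : C, Δ X ≫ pinv (Δ X) = 𝟙 X
  Δ_tensor : ∀ X Y : C, Δ (X ⊗ Y) = (Δ X ⊗ₘ Δ Y) ≫ midSwap C X X Y Y
  Δ_unit : Δ (𝟙_ C) = (λ_ (𝟙_ C)).inv

open DiscreteInverseCategory

variable {C : Type u} [Category.{v} C] [MonoidalCategory C] [SymmetricCategory C]
  [DiscreteInverseCategory C]

/-- A representative of a morphism `X → Y` of the Cartesian completion `X̃`:
a pair `(S, f)` with `f : X ⟶ Y ⊗ S` ("a map with a history"). -/
def TildePair (X Y : C) : Type max u v := Σ S : C, X ⟶ Y ⊗ S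

/-- The defining relation of the Cartesian completion: `(f, S) ∼ (g, T)` iff
`f;(Δ_Y ⊗ id_S);(id_Y ⊗ f°);(id_Y ⊗ g);(∇_Y ⊗ id_T) = g`
(coherence isomorphisms made explicit). -/
def tildeRel {X Y : C} (p q : TildePair X Y) : Prop :=
  p.2 ≫ (Δ Y ⊗ₘ 𝟙 p.1) ≫ (α_ Y Y p.1).hom ≫ (𝟙 Y ⊗ₘ pinv p.2) ≫ (𝟙 Y ⊗ₘ q.2) ≫
      (α_ Y Y q.1).inv ≫ (pinv (Δ Y) ⊗ₘ 𝟙 q.1) = q.2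

/-- Hom-sets of the Cartesian completion `X̃`: equivalence classes of pairs. -/
def TildeHom (X Y : C) := Quot (tildeRel (X := X) (Y := Y))

/-- The class of a representative pair. -/
def tMk {X Y : C} (p : TildePair X Y) : TildeHom X Y := Quot.mk _ p

/-- The canonical functor `ι : X → X̃` on morphisms: `f ↦ [(f ; ρ⁻¹, I)]`. -/
def tOf {X Y : C} (f : X ⟶ Y) : TildeHom X Y := tMk ⟨𝟙_ C, f ≫ (ρ_ Y).inv⟩

/-- Composition of representatives in the Cartesian completion:
`(f, S);(g, T) := (f;(g ⊗ id_S);α, T ⊗ S)`. -/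
def pairComp {X Y Z : C} (p : TildePair X Y) (q : TildePair Y Z) : TildePair X Z :=
  ⟨q.1 ⊗ p.1, p.2 ≫ (q.2 ⊗ₘ 𝟙 p.1) ≫ (α_ Z q.1 p.1).hom⟩

/-- Tensor of representatives in the Cartesian completion:
`(f, S) ⊗ (g, T) := ((f ⊗ g);(id ⊗ σ ⊗ id), S ⊗ T)`. -/
def pairTensor {X X' Y Y' : C} (p : TildePair X Y) (q : TildePair X' Y') :
    TildePair (X ⊗ X') (Y ⊗ Y') :=
  ⟨p.1 ⊗ q.1, (p.2 ⊗ₘ q.2) ≫ midSwap C Y p.1 Y' q.1⟩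

section Aux

lemma rst_id' (A : C) : rst (𝟙 A) = 𝟙 A := by
  simpa using rst_comp (𝟙 A)

lemma rst_absorb {A B B' : C} (f : A ⟶ B) (g : B ⟶ B') :
    rst f ≫ rst (f ≫ g) = rst (f ≫ g) := by
  calc rst f ≫ rst (f ≫ g) = rst (rst f ≫ (f ≫ g)) := (rst_rst f (f ≫ g)).symm
    _ = rst (f ≫ g) := by rw [← Category.assoc, rst_comp]

lemma rst_comp_rst' {A B B' : C} (f : A ⟶ B) (g : B ⟶ B') :
    rst (f ≫ rst g) = rst (f ≫ g) := by
  rw [comp_rst f g, rst_rst, rst_comm, rst_absorb]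

lemma rst_iso' {A B : C} (g : A ⟶ B) (g' : B ⟶ A) (h : g ≫ g' = 𝟙 A) :
    rst g = 𝟙 A := by
  have := rst_absorb g g'
  rw [h, rst_id'] at this
  simpa using this

lemma pinv_unique {A B : C} (f : A ⟶ B) (g : B ⟶ A)
    (h1 : f ≫ g = rst f) (h2 : g ≫ f = rst g) : g = pinv f := by
  set k := pinv f with hk
  have hfk : f ≫ k = rst f := comp_pinv f
  have hkf : k ≫ f = rst k := pinv_comp f
  have hg : g = rst g ≫ k := by
    calc g = rst g ≫ g := (rst_comp g).symm
      _ = (g ≫ f) ≫ g := by rw [h2]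
      _ = g ≫ rst f := by rw [Category.assoc, h1]
      _ = g ≫ f ≫ k := by rw [hfk]
      _ = rst g ≫ k := by rw [← Category.assoc, h2]
  have hkg : k = rst k ≫ g := by
    calc k = rst k ≫ k := (rst_comp k).symm
      _ = (k ≫ f) ≫ k := by rw [hkf]
      _ = k ≫ rst f := by rw [Category.assoc, hfk]
      _ = k ≫ f ≫ g := by rw [h1]
      _ = rst k ≫ g := by rw [← Category.assoc, hkf]
  have h3 : rst g = rst g ≫ rst k := by
    conv_lhs => rw [hg]
    rw [rst_rst]
  have h4 : rst k = rst k ≫ rst g := by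
    conv_lhs => rw [hkg]
    rw [rst_rst]
  have h5 : rst g = rst k := by
    rw [h3, rst_comm, ← h4]
  calc g = rst g ≫ k := hg
    _ = rst k ≫ k := by rw [h5]
    _ = k := rst_comp k

lemma pinv_comp_isoinv {A B B' : C} (f : A ⟶ B) (g : B ⟶ B') (g' : B' ⟶ B)
    (hgg : g ≫ g' = 𝟙 B) (hgg' : g' ≫ g = 𝟙 B') :
    pinv (f ≫ g) = g' ≫ pinv f := by
  refine (pinv_unique (f ≫ g) (g' ≫ pinv f) ?_ ?_).symm
  · have hrst : rst (f ≫ g) = rst f := by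
      rw [← rst_comp_rst' f g, rst_iso' g g' hgg]
      simp
    calc (f ≫ g) ≫ g' ≫ pinv f = f ≫ (g ≫ g') ≫ pinv f := by simp
      _ = f ≫ pinv f := by rw [hgg]; simp
      _ = rst f := comp_pinv f
      _ = rst (f ≫ g) := hrst.symm
  · calc (g' ≫ pinv f) ≫ f ≫ g = g' ≫ (pinv f ≫ f) ≫ g := by simp
      _ = g' ≫ rst (pinv f) ≫ g := by rw [pinv_comp]
      _ = (g' ≫ rst (pinv f)) ≫ g := by simp
      _ = (rst (g' ≫ pinv f) ≫ g') ≫ g := by rw [comp_rst]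
      _ = rst (g' ≫ pinv f) ≫ g' ≫ g := by simp
      _ = rst (g' ≫ pinv f) := by rw [hgg']; simp

/-- The key computation: a pair of the form `(Δ_X ; (id ⊗ c), S)` with `c : X ≅ S`
is related to the identity pair. -/
lemma counit_rel (X S : C) (c : X ≅ S) :
    tildeRel (⟨S, Δ X ≫ (𝟙 X ⊗ₘ c.hom)⟩ : TildePair X X)
      (⟨𝟙_ C, 𝟙 X ≫ (ρ_ X).inv⟩ : TildePair X X) := by
  unfold tildeRel
  dsimp only
  have hp : pinv (Δ X ≫ (𝟙 X ⊗ₘ c.hom)) = (𝟙 X ⊗ₘ c.inv) ≫ pinv (Δ X) := by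
    refine pinv_comp_isoinv (Δ X) (𝟙 X ⊗ₘ c.hom) (𝟙 X ⊗ₘ c.inv) ?_ ?_ <;>
      · rw [tensorHom_comp_tensorHom]; simp
  rw [hp]
  -- step A : fuse (𝟙 ⊗ c.hom) with (Δ ⊗ 𝟙 S)
  slice_lhs 2 3 => rw [tensorHom_comp_tensorHom, Category.id_comp, Category.comp_id]
  -- step B : split Δ ⊗ c.hom
  have hB : Δ X ⊗ₘ c.hom = (Δ X ⊗ₘ 𝟙 X) ≫ ((𝟙 X ⊗ₘ 𝟙 X) ⊗ₘ c.hom) := by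
    rw [tensorHom_comp_tensorHom]; simp
  rw [hB]
  -- step C : associator naturality
  slice_lhs 3 4 => rw [associator_naturality]
  -- step D : cancel c
  slice_lhs 4 5 => rw [tensorHom_comp_tensorHom, Category.id_comp]
  rw [show (𝟙 X ⊗ₘ c.hom) ≫ (𝟙 X ⊗ₘ c.inv) ≫ pinv (Δ X) = pinv (Δ X) by
    rw [← Category.assoc, tensorHom_comp_tensorHom]; simp]
  -- step E : coassociativity
  slice_lhs 1 3 => rw [Δ_coassoc]
  -- step F : specialness
  slice_lhs 2 3 => rw [tensorHom_comp_tensorHom, special, Category.id_comp, id_tensorHom_id]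
  rw [Category.id_comp]
  -- step G : coherence + naturality of ρ⁻¹
  have hcoh : (𝟙 X ⊗ₘ (𝟙 X ≫ (ρ_ X).inv)) ≫ (α_ X X (𝟙_ C)).inv
      = (ρ_ (X ⊗ X)).inv := by
    rw [Category.id_comp]; monoidal
  slice_lhs 2 3 => rw [hcoh]
  have hnat : (ρ_ (X ⊗ X)).inv ≫ (pinv (Δ X) ⊗ₘ 𝟙 (𝟙_ C)) =
      pinv (Δ X) ≫ (ρ_ X).inv := by
    rw [tensorHom_id, ← rightUnitor_inv_naturality]
  slice_lhs 2 3 => rw [hnat]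
  rw [← Category.assoc, special, Category.id_comp]

end Aux

section Aux2
set_option maxRecDepth 10000

lemma beta_unit' : (β_ (𝟙_ C) (𝟙_ C)).hom = 𝟙 (𝟙_ C ⊗ 𝟙_ C) := by
  have h := braiding_rightUnitor (C := C) (𝟙_ C)
  rw [unitors_equal] at h
  simpa using ((Iso.comp_inv_eq _).2 h.symm).symm

lemma midSwap_eq_tensorμ (A B A' B' : C) : midSwap C A B A' B' = tensorμ A B A' B' := by
  simp [midSwap, tensorμ, id_tensorHom, tensorHom_id]

/-- The coherence iso `X ≅ (I ⊗ (X ⊗ I)) ⊗ I`. -/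
def cIsoL (X : C) : X ≅ (𝟙_ C ⊗ (X ⊗ 𝟙_ C)) ⊗ 𝟙_ C :=
  (ρ_ X).symm ≪≫ (λ_ (X ⊗ 𝟙_ C)).symm ≪≫ (ρ_ (𝟙_ C ⊗ (X ⊗ 𝟙_ C))).symm

/-- The coherence iso `X ≅ (I ⊗ (I ⊗ X)) ⊗ I`. -/
def cIsoR (X : C) : X ≅ (𝟙_ C ⊗ (𝟙_ C ⊗ X)) ⊗ 𝟙_ C :=
  (λ_ X).symm ≪≫ (λ_ (𝟙_ C ⊗ X)).symm ≪≫ (ρ_ (𝟙_ C ⊗ (𝟙_ C ⊗ X))).symm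

lemma pairL_eq (X : C) :
    pairComp (⟨𝟙_ C, Δ X ≫ (ρ_ (X ⊗ X)).inv⟩ : TildePair X (X ⊗ X))
        (pairComp
          (pairTensor (⟨X, (λ_ X).inv⟩ : TildePair X (𝟙_ C))
            (⟨𝟙_ C, (ρ_ X).inv⟩ : TildePair X X))
          (⟨𝟙_ C, (λ_ X).hom ≫ (ρ_ X).inv⟩ : TildePair (𝟙_ C ⊗ X) X)) =
      (⟨(𝟙_ C ⊗ (X ⊗ 𝟙_ C)) ⊗ 𝟙_ C, Δ X ≫ (𝟙 X ⊗ₘ (cIsoL X).hom)⟩ : TildePair X X) := by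
  unfold pairComp pairTensor
  dsimp only
  refine congrArg (Sigma.mk _) ?_
  have step : Δ X ≫ (ρ_ (X ⊗ X)).inv ≫
      (((((λ_ X).inv ⊗ₘ (ρ_ X).inv) ≫ midSwap C (𝟙_ C) X X (𝟙_ C)) ≫
          (((λ_ X).hom ≫ (ρ_ X).inv) ⊗ₘ 𝟙 (X ⊗ 𝟙_ C)) ≫ (α_ X (𝟙_ C) (X ⊗ 𝟙_ C)).hom) ⊗ₘ 𝟙 (𝟙_ C)) ≫
        (α_ X (𝟙_ C ⊗ X ⊗ 𝟙_ C) (𝟙_ C)).hom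
      = Δ X ≫ (β_ X X).hom ≫ (𝟙 X ⊗ₘ (cIsoL X).hom) := by
    congr 1
    rw [midSwap_eq_tensorμ, tensorμ]
    dsimp [cIsoL]
    monoidal
  simp only [Category.assoc] at step ⊢
  rw [step, ← Category.assoc, Δ_cocomm]

lemma pairR_eq (X : C) :
    pairComp (⟨𝟙_ C, Δ X ≫ (ρ_ (X ⊗ X)).inv⟩ : TildePair X (X ⊗ X))
        (pairComp
          (pairTensor (⟨𝟙_ C, (ρ_ X).inv⟩ : TildePair X X)
            (⟨X, (λ_ X).inv⟩ : TildePair X (𝟙_ C)))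
          (⟨𝟙_ C, (ρ_ X).hom ≫ (ρ_ X).inv⟩ : TildePair (X ⊗ 𝟙_ C) X)) =
      (⟨(𝟙_ C ⊗ (𝟙_ C ⊗ X)) ⊗ 𝟙_ C, Δ X ≫ (𝟙 X ⊗ₘ (cIsoR X).hom)⟩ : TildePair X X) := by
  unfold pairComp pairTensor
  dsimp only
  refine congrArg (Sigma.mk _) ?_
  simp only [Category.assoc]
  congr 1
  rw [midSwap_eq_tensorμ, tensorμ, beta_unit']
  dsimp [cIsoR]
  monoidal

end Aux2

/-- in the Cartesian completion `X̃` of a discrete inverse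
category, the induced comultiplication `[Δ_X] = [(Δ_X ; ρ⁻¹, I)] : X → X ⊗ X`
is counital, with counit `ε_X = [(λ⁻¹ : X ⟶ I ⊗ X, X)] : X → I`:
`[Δ_X];(ε_X ⊗ id_X);ι(λ) = ι(id_X) = [Δ_X];(id_X ⊗ ε_X);ι(ρ)` in `X̃`
(so the chosen semi-Frobenius structure becomes counital in `X̃`). -/
theorem tilde_counital (X : C) :
    tMk (pairComp (⟨𝟙_ C, Δ X ≫ (ρ_ (X ⊗ X)).inv⟩ : TildePair X (X ⊗ X))
        (pairComp
          (pairTensor (⟨X, (λ_ X).inv⟩ : TildePair X (𝟙_ C))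
            (⟨𝟙_ C, (ρ_ X).inv⟩ : TildePair X X))
          (⟨𝟙_ C, (λ_ X).hom ≫ (ρ_ X).inv⟩ : TildePair (𝟙_ C ⊗ X) X))) =
      tOf (𝟙 X) ∧
    tMk (pairComp (⟨𝟙_ C, Δ X ≫ (ρ_ (X ⊗ X)).inv⟩ : TildePair X (X ⊗ X))
        (pairComp
          (pairTensor (⟨𝟙_ C, (ρ_ X).inv⟩ : TildePair X X)
            (⟨X, (λ_ X).inv⟩ : TildePair X (𝟙_ C)))
          (⟨𝟙_ C, (ρ_ X).hom ≫ (ρ_ X).inv⟩ : TildePair (X ⊗ 𝟙_ C) X))) =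
      tOf (𝟙 X) := by
  
  constructor
  · rw [tMk, pairL_eq]
    exact Quot.sound (counit_rel X _ (cIsoL X))
  · rw [tMk, pairR_eq]
    exact Quot.sound (counit_rel X _ (cIsoR X))
end

section
/- Let j : FPinj₂ → FPar₂ be the inclusion prop morphism and j° : FPinj₂ → FPar₂^op the identity-on-objects prop morphism sending a partial injection to its partial inverse (relational converse). Let P : FPar₂ → FSpan₂ send a partial function f : Fin(2^n) ⇀ Fin(2^m) with domain D to the class of the span Fin(2^n) ← D → Fin(2^m) whose left leg is the inclusion of D and whose right leg is the restriction of f, and let P° : FPar₂^op → FSpan₂ send f to the reversed span. Then P and P° are prop morphisms with j°;P° = j;P, and this square is a pushout in the category of props: for every prop Q and prop morphisms F : FPar₂^op → Q, G : FPar₂ → Q with j°;F = j;G, there is a unique prop morphism H : FSpan₂ → Q with P°;H = F and P;H = G. -/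
universe u

/-- Diagrammatic composition of partial functions: `pcomp f g = f then g`. -/
def pcomp {X Y Z : Type u} (f : X →. Y) (g : Y →. Z) : X →. Z := fun x => (f x).bind g

/-- The identity partial function. -/
def pid (X : Type u) : X →. X := fun x => Part.some x

/-- A total function regarded as a partial function. -/
def pofFun {X Y : Type u} (f : X → Y) : X →. Y := fun x => Part.some (f x)

/-- The cartesian product (tensor) of two partial functions. -/
def ptensor {X Y X' Y' : Type u} (f : X →. Y) (g : X' →. Y') : X × X' →. Y × Y' :=
  fun p => (f p.1).bind fun y => (g p.2).map fun y' => (y, y')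

/-- The relational converse of a partial function (the partial inverse, when
the partial function is injective on its domain). -/
noncomputable def pinv {X Y : Type u} (f : X →. Y) : Y →. X :=
  fun y => ⟨∃ x, y ∈ f x, fun h => h.choose⟩

/-- A partial function is a partial injection when it is injective on its
domain. -/
def IsPInj {X Y : Type u} (f : X →. Y) : Prop :=
  ∀ ⦃x₁ x₂ : X⦄ ⦃y : Y⦄, y ∈ f x₁ → y ∈ f x₂ → x₁ = x₂

/-- Partial injections. -/
def PInj (X Y : Type u) : Type u := {f : X →. Y // IsPInj f}

theorem isPInj_pid (X : Type u) : IsPInj (pid X) := fun _ _ _ h₁ h₂ =>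
  (Part.mem_some_iff.mp h₁).symm.trans (Part.mem_some_iff.mp h₂)

theorem isPInj_pofFun {X Y : Type u} {f : X → Y} (hf : Function.Injective f) :
    IsPInj (pofFun f) := fun _ _ _ h₁ h₂ =>
  hf ((Part.mem_some_iff.mp h₁).symm.trans (Part.mem_some_iff.mp h₂))

theorem IsPInj.pcomp {X Y Z : Type u} {f : X →. Y} {g : Y →. Z}
    (hf : IsPInj f) (hg : IsPInj g) : IsPInj (pcomp f g) := by
  intro x₁ x₂ z h₁ h₂
  obtain ⟨y₁, hy₁, hz₁⟩ := Part.mem_bind_iff.mp h₁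
  obtain ⟨y₂, hy₂, hz₂⟩ := Part.mem_bind_iff.mp h₂
  obtain rfl := hg hz₁ hz₂
  exact hf hy₁ hy₂

theorem IsPInj.ptensor {X Y X' Y' : Type u} {f : X →. Y} {g : X' →. Y'}
    (hf : IsPInj f) (hg : IsPInj g) : IsPInj (ptensor f g) := by
  intro p₁ p₂ q h₁ h₂
  obtain ⟨y₁, hy₁, hq₁⟩ := Part.mem_bind_iff.mp h₁
  obtain ⟨y₁', hy₁', he₁⟩ := (Part.mem_map_iff _).mp hq₁
  obtain ⟨y₂, hy₂, hq₂⟩ := Part.mem_bind_iff.mp h₂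
  obtain ⟨y₂', hy₂', he₂⟩ := (Part.mem_map_iff _).mp hq₂
  have h12 := he₁.trans he₂.symm
  obtain rfl : y₁ = y₂ := congrArg Prod.fst h12
  obtain rfl : y₁' = y₂' := congrArg Prod.snd h12
  exact Prod.ext (hf hy₁ hy₂) (hg hy₁' hy₂')

theorem isPInj_pinv {X Y : Type u} (f : X →. Y) : IsPInj (pinv f) := by
  intro y₁ y₂ x h₁ h₂
  obtain ⟨d₁, e₁⟩ := h₁
  obtain ⟨d₂, e₂⟩ := h₂
  have s₁ : y₁ ∈ f x := by rw [← e₁]; exact d₁.choose_spec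
  have s₂ : y₂ ∈ f x := by rw [← e₂]; exact d₂.choose_spec
  exact Part.mem_unique s₁ s₂
universe w

/-- The underlying data of a prop: a strict symmetric monoidal category whose
objects are the natural numbers with tensor `n ⊗ m = n + m`. -/
structure PROPCore : Type (w + 1) where
  Hom : ℕ → ℕ → Type w
  id : ∀ n : ℕ, Hom n n
  comp : ∀ {a b c : ℕ}, Hom a b → Hom b c → Hom a c
  tensor : ∀ {a b c d : ℕ}, Hom a b → Hom c d → Hom (a + c) (b + d)
  swap : ∀ a b : ℕ, Hom (a + b) (b + a)

/-- Transport of homs along equalities of objects. -/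
def PROPCore.cast (P : PROPCore.{w}) {a b a' b' : ℕ} (h₁ : a = a') (h₂ : b = b')
    (f : P.Hom a b) : P.Hom a' b' := by subst h₁; subst h₂; exact f

/-- The laws of a prop (strict symmetric monoidal category on `(ℕ, +)`). -/
structure PROPLaws (P : PROPCore.{w}) : Prop where
  id_comp : ∀ {a b : ℕ} (f : P.Hom a b), P.comp (P.id a) f = f
  comp_id : ∀ {a b : ℕ} (f : P.Hom a b), P.comp f (P.id b) = f
  assoc : ∀ {a b c d : ℕ} (f : P.Hom a b) (g : P.Hom b c) (h : P.Hom c d),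
    P.comp (P.comp f g) h = P.comp f (P.comp g h)
  tensor_id : ∀ a b : ℕ, P.tensor (P.id a) (P.id b) = P.id (a + b)
  tensor_comp : ∀ {a b c a' b' c' : ℕ} (f : P.Hom a b) (g : P.Hom b c)
    (f' : P.Hom a' b') (g' : P.Hom b' c'),
    P.tensor (P.comp f g) (P.comp f' g') = P.comp (P.tensor f f') (P.tensor g g')
  tensor_assoc : ∀ {a b c d e k : ℕ} (f : P.Hom a b) (g : P.Hom c d) (h : P.Hom e k),
    P.tensor (P.tensor f g) h =
      P.cast (Nat.add_assoc a c e).symm (Nat.add_assoc b d k).symm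
        (P.tensor f (P.tensor g h))
  tensor_unit_left : ∀ {a b : ℕ} (f : P.Hom a b),
    P.tensor (P.id 0) f = P.cast (Nat.zero_add a).symm (Nat.zero_add b).symm f
  tensor_unit_right : ∀ {a b : ℕ} (f : P.Hom a b), P.tensor f (P.id 0) = f
  swap_swap : ∀ a b : ℕ, P.comp (P.swap a b) (P.swap b a) = P.id (a + b)
  swap_natural : ∀ {a b c d : ℕ} (f : P.Hom a b) (g : P.Hom c d),
    P.comp (P.tensor f g) (P.swap b d) = P.comp (P.swap a c) (P.tensor g f)
  swap_zero : ∀ a : ℕ, P.swap a 0 = P.cast rfl (Nat.zero_add a).symm (P.id a)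
  swap_hexagon : ∀ a b c : ℕ,
    P.swap (a + b) c =
      P.comp
        (P.cast (Nat.add_assoc a b c).symm (Nat.add_assoc a c b).symm
          (P.tensor (P.id a) (P.swap b c)))
        (P.cast rfl (Nat.add_assoc c a b) (P.tensor (P.swap a c) (P.id b)))

/-- A prop. -/
structure PROP : Type (w + 1) where
  core : PROPCore.{w}
  laws : PROPLaws core

/-- A morphism of props (an identity-on-objects strict symmetric monoidal
functor), expressed as a hom-wise map preserving the structure. -/
def IsPROPHom (P : PROPCore.{w}) (Q : PROPCore.{w'})
    (Φ : ∀ a b : ℕ, P.Hom a b → Q.Hom a b) : Prop :=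
  (∀ n : ℕ, Φ n n (P.id n) = Q.id n) ∧
  (∀ (a b c : ℕ) (f : P.Hom a b) (g : P.Hom b c),
    Φ a c (P.comp f g) = Q.comp (Φ a b f) (Φ b c g)) ∧
  (∀ (a b c d : ℕ) (f : P.Hom a b) (g : P.Hom c d),
    Φ (a + c) (b + d) (P.tensor f g) = Q.tensor (Φ a b f) (Φ c d g)) ∧
  (∀ a b : ℕ, Φ (a + b) (b + a) (P.swap a b) = Q.swap a b)
/-- The canonical identification `Fin (2^(a+c)) ≃ Fin (2^a) × Fin (2^c)`. -/
def pow2Equiv (a c : ℕ) : Fin (2 ^ (a + c)) ≃ Fin (2 ^ a) × Fin (2 ^ c) :=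
  (finCongr (pow_add 2 a c)).trans finProdFinEquiv.symm

/-- Morphisms of the prop `FPar₂`: partial functions `Fin (2^a) ⇀ Fin (2^b)`. -/
def parHom (a b : ℕ) : Type := Fin (2 ^ a) →. Fin (2 ^ b)

/-- The tensor of `FPar₂`: the cartesian product of partial functions,
transported along the identifications `Fin (2^(a+c)) ≃ Fin (2^a) × Fin (2^c)`. -/
def parTensor {a b c d : ℕ} (f : parHom a b) (g : parHom c d) : parHom (a + c) (b + d) :=
  pcomp (pofFun (pow2Equiv a c)) (pcomp (ptensor f g) (pofFun (pow2Equiv b d).symm))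

/-- The symmetry bijection `Fin (2^(a+b)) ≃ Fin (2^(b+a))`. -/
def swapEquiv (a b : ℕ) : Fin (2 ^ (a + b)) ≃ Fin (2 ^ (b + a)) :=
  (pow2Equiv a b).trans ((Equiv.prodComm _ _).trans (pow2Equiv b a).symm)

/-- The prop of partial functions between the `Fin (2^n)`. -/
def FPar2Core : PROPCore.{0} where
  Hom := parHom
  id n := pid (Fin (2 ^ n))
  comp f g := pcomp f g
  tensor f g := parTensor f g
  swap a b := pofFun (swapEquiv a b)

/-- The opposite prop of `FPar₂`. -/
def FPar2opCore : PROPCore.{0} where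
  Hom a b := parHom b a
  id n := pid (Fin (2 ^ n))
  comp f g := pcomp g f
  tensor f g := parTensor f g
  swap a b := pofFun (swapEquiv b a)

/-- Morphisms of the prop `FPinj₂` (= `TOF`): partial injections between the
`Fin (2^n)`. -/
def pinjHom (a b : ℕ) : Type := PInj (Fin (2 ^ a)) (Fin (2 ^ b))

theorem isPInj_parTensor {a b c d : ℕ} {f : parHom a b} {g : parHom c d}
    (hf : IsPInj f) (hg : IsPInj g) : IsPInj (parTensor f g) :=
  (isPInj_pofFun (pow2Equiv a c).injective).pcomp
    ((hf.ptensor hg).pcomp (isPInj_pofFun (pow2Equiv b d).symm.injective))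

/-- The prop of partial injections between the `Fin (2^n)`. -/
def FPinj2Core : PROPCore.{0} where
  Hom := pinjHom
  id n := ⟨pid (Fin (2 ^ n)), isPInj_pid _⟩
  comp f g := ⟨pcomp f.1 g.1, f.2.pcomp g.2⟩
  tensor f g := ⟨parTensor f.1 g.1, isPInj_parTensor f.2 g.2⟩
  swap a b := ⟨pofFun (swapEquiv a b), isPInj_pofFun (swapEquiv a b).injective⟩

/-- The inclusion `j : FPinj₂ → FPar₂`. -/
def jmap (a b : ℕ) (f : FPinj2Core.Hom a b) : FPar2Core.Hom a b := f.1

/-- The partial inverse of a partial injection, as a partial injection. -/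
noncomputable def pinjInv {X Y : Type} (f : PInj X Y) : PInj Y X :=
  ⟨pinv f.1, isPInj_pinv f.1⟩

/-- The map `j° : FPinj₂ → FPar₂^op` sending a partial injection to its
partial inverse (relational converse). -/
noncomputable def jopmap (a b : ℕ) (f : FPinj2Core.Hom a b) : FPar2opCore.Hom a b :=
  pinv f.1
/-- A span of finite types between `Fin n` and `Fin m`. -/
structure SpanRep (n m : ℕ) : Type 1 where
  carrier : Type
  [fin : Fintype carrier]
  left : carrier → Fin n
  right : carrier → Fin m

attribute [instance] SpanRep.fin

/-- Two spans are identified when a bijection of their apices commutes with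
both legs. -/
def spanEqv {n m : ℕ} (s t : SpanRep n m) : Prop :=
  ∃ e : s.carrier ≃ t.carrier, (∀ c, t.left (e c) = s.left c) ∧ (∀ c, t.right (e c) = s.right c)

/-- Hom-sets of the span category: isomorphism classes of spans. -/
def SpanHom (n m : ℕ) : Type 1 := Quot (@spanEqv n m)

/-- The class of a span. -/
def sMk {n m : ℕ} (s : SpanRep n m) : SpanHom n m := Quot.mk _ s

/-- The identity span. -/
def spanRepId (n : ℕ) : SpanRep n n := { carrier := Fin n, left := id, right := id }

/-- Composition of spans by pullback. -/
def spanRepComp {n m k : ℕ} (s : SpanRep n m) (t : SpanRep m k) : SpanRep n k where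
  carrier := {p : s.carrier × t.carrier // s.right p.1 = t.left p.2}
  left p := s.left p.1.1
  right p := t.right p.1.2

theorem spanEqv_comp_left {n m k : ℕ} {s s' : SpanRep n m} (t : SpanRep m k)
    (h : spanEqv s s') : spanEqv (spanRepComp s t) (spanRepComp s' t) := by
  obtain ⟨e, hl, hr⟩ := h
  refine ⟨Equiv.subtypeEquiv (e.prodCongr (Equiv.refl t.carrier)) fun p => ?_,
    fun c => ?_, fun c => ?_⟩
  · show s.right p.1 = t.left p.2 ↔ s'.right (e p.1) = t.left p.2
    rw [hr p.1]
  · show s'.left (e c.1.1) = s.left c.1.1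
    exact hl c.1.1
  · rfl

theorem spanEqv_comp_right {n m k : ℕ} (s : SpanRep n m) {t t' : SpanRep m k}
    (h : spanEqv t t') : spanEqv (spanRepComp s t) (spanRepComp s t') := by
  obtain ⟨e, hl, hr⟩ := h
  refine ⟨Equiv.subtypeEquiv ((Equiv.refl s.carrier).prodCongr e) fun p => ?_,
    fun c => ?_, fun c => ?_⟩
  · show s.right p.1 = t.left p.2 ↔ s.right p.1 = t'.left (e p.2)
    rw [hl p.2]
  · rfl
  · show t'.right (e c.1.2) = t.right c.1.2
    exact hr c.1.2

/-- Composition descends to isomorphism classes of spans. -/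
def spanComp {n m k : ℕ} : SpanHom n m → SpanHom m k → SpanHom n k :=
  Quot.lift₂ (fun s t => sMk (spanRepComp s t))
    (fun s _ _ h => Quot.sound (spanEqv_comp_right s h))
    (fun _ _ t h => Quot.sound (spanEqv_comp_left t h))
/-- The tensor of spans for the prop `FSpan₂`, transported along
`Fin (2^(a+c)) ≃ Fin (2^a) × Fin (2^c)`. -/
def spanRepTensor2 {a b c d : ℕ} (s : SpanRep (2 ^ a) (2 ^ b)) (t : SpanRep (2 ^ c) (2 ^ d)) :
    SpanRep (2 ^ (a + c)) (2 ^ (b + d)) where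
  carrier := s.carrier × t.carrier
  left p := (pow2Equiv a c).symm (s.left p.1, t.left p.2)
  right p := (pow2Equiv b d).symm (s.right p.1, t.right p.2)

theorem spanEqv_tensor2_left {a b c d : ℕ} {s s' : SpanRep (2 ^ a) (2 ^ b)}
    (t : SpanRep (2 ^ c) (2 ^ d)) (h : spanEqv s s') :
    spanEqv (spanRepTensor2 s t) (spanRepTensor2 s' t) := by
  obtain ⟨e, hl, hr⟩ := h
  refine ⟨e.prodCongr (Equiv.refl t.carrier), fun p => ?_, fun p => ?_⟩
  · show (pow2Equiv a c).symm (s'.left (e p.1), t.left p.2) = _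
    rw [hl p.1]; rfl
  · show (pow2Equiv b d).symm (s'.right (e p.1), t.right p.2) = _
    rw [hr p.1]; rfl

theorem spanEqv_tensor2_right {a b c d : ℕ} (s : SpanRep (2 ^ a) (2 ^ b))
    {t t' : SpanRep (2 ^ c) (2 ^ d)} (h : spanEqv t t') :
    spanEqv (spanRepTensor2 s t) (spanRepTensor2 s t') := by
  obtain ⟨e, hl, hr⟩ := h
  refine ⟨(Equiv.refl s.carrier).prodCongr e, fun p => ?_, fun p => ?_⟩
  · show (pow2Equiv a c).symm (s.left p.1, t'.left (e p.2)) = _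
    rw [hl p.2]; rfl
  · show (pow2Equiv b d).symm (s.right p.1, t'.right (e p.2)) = _
    rw [hr p.2]; rfl

/-- The tensor of `FSpan₂` on isomorphism classes. -/
def spanTensor2 {a b c d : ℕ} :
    SpanHom (2 ^ a) (2 ^ b) → SpanHom (2 ^ c) (2 ^ d) → SpanHom (2 ^ (a + c)) (2 ^ (b + d)) :=
  Quot.lift₂ (fun s t => sMk (spanRepTensor2 s t))
    (fun s _ _ h => Quot.sound (spanEqv_tensor2_right s h))
    (fun _ _ t h => Quot.sound (spanEqv_tensor2_left t h))

/-- The prop `FSpan₂` of isomorphism classes of spans of finite types between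
the `Fin (2^n)` (the full subcategory of spans of finite ordinals spanned by
the powers of two). -/
def FSpan2Core : PROPCore.{1} where
  Hom a b := SpanHom (2 ^ a) (2 ^ b)
  id n := sMk (spanRepId (2 ^ n))
  comp := spanComp
  tensor := spanTensor2
  swap a b := sMk { carrier := Fin (2 ^ (a + b)), left := _root_.id, right := swapEquiv a b }

/-- The span of a partial function: its domain of definition, included into
the source and mapped into the target. -/
noncomputable def parToSpan {a b : ℕ} (f : parHom a b) : SpanRep (2 ^ a) (2 ^ b) := by
  classical
  exact
    { carrier := {x : Fin (2 ^ a) // (f x).Dom}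
      left := fun x => x.1
      right := fun x => (f x.1).get x.2 }

/-- Reversal of a span. -/
def spanRev {n m : ℕ} (s : SpanRep n m) : SpanRep m n :=
  { carrier := s.carrier, left := s.right, right := s.left }

/-- The prop morphism `P : FPar₂ → FSpan₂`, sending a partial function to the
class of its span of definition. -/
noncomputable def Pmap (a b : ℕ) (f : FPar2Core.Hom a b) : FSpan2Core.Hom a b :=
  sMk (parToSpan f)

/-- The prop morphism `P° : FPar₂^op → FSpan₂`, sending a partial function to
the class of its reversed span of definition. -/
noncomputable def Popmap (a b : ℕ) (f : FPar2opCore.Hom a b) : FSpan2Core.Hom a b :=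
  sMk (spanRev (parToSpan f))

section PFunLemmas

theorem mem_pcomp {X Y Z : Type u} {f : X →. Y} {g : Y →. Z} {x : X} {z : Z} :
    z ∈ pcomp f g x ↔ ∃ y, y ∈ f x ∧ z ∈ g y := by
  exact Part.mem_bind_iff

theorem mem_pid {X : Type u} {x y : X} : y ∈ pid X x ↔ y = x := Part.mem_some_iff

theorem mem_pofFun {X Y : Type u} {f : X → Y} {x : X} {y : Y} :
    y ∈ pofFun f x ↔ y = f x := Part.mem_some_iff

theorem mem_ptensor {X Y X' Y' : Type u} {f : X →. Y} {g : X' →. Y'} {p : X × X'} {q : Y × Y'} :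
    q ∈ ptensor f g p ↔ ∃ y y', y ∈ f p.1 ∧ y' ∈ g p.2 ∧ q = (y, y') := by
  simp only [ptensor, Part.mem_bind_iff, Part.mem_map_iff]
  constructor
  · rintro ⟨y, hy, y', hy', rfl⟩; exact ⟨y, y', hy, hy', rfl⟩
  · rintro ⟨y, y', hy, hy', rfl⟩; exact ⟨y, hy, y', hy', rfl⟩

theorem mem_parTensor {a b c d : ℕ} {f : parHom a b} {g : parHom c d}
    {x : Fin (2 ^ (a + c))} {q : Fin (2 ^ (b + d))} :
    q ∈ parTensor f g x ↔ ∃ y y', y ∈ f (pow2Equiv a c x).1 ∧ y' ∈ g (pow2Equiv a c x).2 ∧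
      q = (pow2Equiv b d).symm (y, y') := by
  simp only [parTensor, mem_pcomp, mem_pofFun]
  constructor
  · rintro ⟨z, rfl, w, hw, rfl⟩
    erw [mem_ptensor] at hw
    obtain ⟨y, y', h1, h2, rfl⟩ := hw
    exact ⟨y, y', h1, h2, rfl⟩
  · rintro ⟨y, y', h1, h2, rfl⟩
    exact ⟨pow2Equiv a c x, rfl, (y, y'), mem_ptensor.mpr ⟨y, y', h1, h2, rfl⟩, rfl⟩

theorem mem_pinv {X Y : Type u} {f : X →. Y} (hf : IsPInj f) {x : X} {y : Y} :
    x ∈ pinv f y ↔ y ∈ f x := by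
  constructor
  · rintro ⟨h, rfl⟩; exact h.choose_spec
  · intro hx
    have hd : ∃ x', y ∈ f x' := ⟨x, hx⟩
    exact ⟨hd, hf hd.choose_spec hx⟩

theorem pinv_pinv {X Y : Type u} {f : X →. Y} (hf : IsPInj f) : pinv (pinv f) = f :=
  PFun.ext fun _ _ => (mem_pinv (isPInj_pinv f)).trans (mem_pinv hf)

theorem pinv_pid {X : Type u} : pinv (pid X) = pid X :=
  PFun.ext fun _ _ => by
    rw [mem_pinv (isPInj_pid X), mem_pid, mem_pid]; exact eq_comm

theorem pinv_pcomp {X Y Z : Type u} {f : X →. Y} {g : Y →. Z} (hf : IsPInj f) (hg : IsPInj g) :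
    pinv (pcomp f g) = pcomp (pinv g) (pinv f) :=
  PFun.ext fun z x => by
    rw [mem_pinv (hf.pcomp hg), mem_pcomp, mem_pcomp]
    constructor
    · rintro ⟨y, h1, h2⟩; exact ⟨y, (mem_pinv hg).mpr h2, (mem_pinv hf).mpr h1⟩
    · rintro ⟨y, h1, h2⟩; exact ⟨y, (mem_pinv hf).mp h2, (mem_pinv hg).mp h1⟩

theorem pinv_pofFun_equiv {X Y : Type u} (E : X ≃ Y) :
    pinv (pofFun (E : X → Y)) = pofFun (E.symm : Y → X) :=
  PFun.ext fun y x => by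
    rw [mem_pinv (isPInj_pofFun E.injective), mem_pofFun, mem_pofFun]
    constructor
    · rintro rfl; simp
    · rintro rfl; simp

end PFunLemmas

section Sec2

theorem pinv_parTensor {a b c d : ℕ} {f : parHom a b} {g : parHom c d}
    (hf : IsPInj f) (hg : IsPInj g) :
    pinv (parTensor f g) = parTensor (pinv f) (pinv g) :=
  PFun.ext fun q x => by
    erw [mem_pinv (isPInj_parTensor hf hg), mem_parTensor, mem_parTensor]
    constructor
    · rintro ⟨y, y', h1, h2, rfl⟩
      refine ⟨(pow2Equiv a c x).1, (pow2Equiv a c x).2, ?_, ?_, ?_⟩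
      · rw [mem_pinv hf]; simpa using h1
      · rw [mem_pinv hg]; simpa using h2
      · simp
    · rintro ⟨u, u', h1, h2, rfl⟩
      rw [mem_pinv hf] at h1
      rw [mem_pinv hg] at h2
      refine ⟨(pow2Equiv b d q).1, (pow2Equiv b d q).2, ?_, ?_, ?_⟩
      · simpa using h1
      · simpa using h2
      · simp

theorem swapEquiv_symm (a b : ℕ) : (swapEquiv a b).symm = swapEquiv b a := by
  ext x
  simp [swapEquiv]

theorem jmap_hom : IsPROPHom FPinj2Core FPar2Core jmap :=
  ⟨fun _ => rfl, fun _ _ _ _ _ => rfl, fun _ _ _ _ _ _ => rfl, fun _ _ => rfl⟩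

theorem jopmap_hom : IsPROPHom FPinj2Core FPar2opCore jopmap := by
  refine ⟨fun n => pinv_pid, fun a b c f g => ?_, fun a b c d f g => ?_, fun a b => ?_⟩
  · exact pinv_pcomp f.2 g.2
  · exact pinv_parTensor f.2 g.2
  · show pinv (pofFun (swapEquiv a b)) = pofFun (swapEquiv b a)
    rw [pinv_pofFun_equiv (swapEquiv a b), swapEquiv_symm]

end Sec2
section SpanLemmas

theorem spanEqv_refl {n m : ℕ} (s : SpanRep n m) : spanEqv s s :=
  ⟨Equiv.refl _, fun _ => rfl, fun _ => rfl⟩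

theorem spanEqv_trans {n m : ℕ} {s t u : SpanRep n m} (h1 : spanEqv s t) (h2 : spanEqv t u) :
    spanEqv s u := by
  obtain ⟨e, hl, hr⟩ := h1
  obtain ⟨e', hl', hr'⟩ := h2
  exact ⟨e.trans e', fun c => (hl' (e c)).trans (hl c), fun c => (hr' (e c)).trans (hr c)⟩

theorem spanRev_eqv {n m : ℕ} {s t : SpanRep n m} (h : spanEqv s t) :
    spanEqv (spanRev s) (spanRev t) := by
  obtain ⟨e, hl, hr⟩ := h
  exact ⟨e, hr, hl⟩

theorem spanRev_comp {n m k : ℕ} (s : SpanRep n m) (t : SpanRep m k) :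
    spanEqv (spanRev (spanRepComp s t)) (spanRepComp (spanRev t) (spanRev s)) := by
  refine ⟨⟨fun p => ⟨(p.1.2, p.1.1), p.2.symm⟩, fun p => ⟨(p.1.2, p.1.1), p.2.symm⟩,
    fun p => rfl, fun p => rfl⟩, fun p => rfl, fun p => rfl⟩

theorem pcomp_dom1 {X Y Z : Type u} {f : X →. Y} {g : Y →. Z} {x : X}
    (h : (pcomp f g x).Dom) : (f x).Dom := by
  obtain ⟨z, hz⟩ := Part.dom_iff_mem.mp h
  obtain ⟨y, hy, -⟩ := mem_pcomp.mp hz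
  exact Part.dom_iff_mem.mpr ⟨y, hy⟩

theorem pcomp_dom2 {X Y Z : Type u} {f : X →. Y} {g : Y →. Z} {x : X}
    (h : (pcomp f g x).Dom) (h1 : (f x).Dom) : (g ((f x).get h1)).Dom := by
  obtain ⟨z, hz⟩ := Part.dom_iff_mem.mp h
  obtain ⟨y, hy, hzg⟩ := mem_pcomp.mp hz
  have hgy : (f x).get h1 = y := Part.mem_unique (Part.get_mem h1) hy
  rw [hgy]
  exact Part.dom_iff_mem.mpr ⟨z, hzg⟩

theorem parToSpan_id (n : ℕ) :
    spanEqv (parToSpan (pid (Fin (2 ^ n)))) (spanRepId (2 ^ n)) := by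
  refine ⟨Equiv.subtypeUnivEquiv fun _ => trivial, fun c => rfl, fun c => rfl⟩

theorem parToSpan_comp {a b c : ℕ} (f : parHom a b) (g : parHom b c) :
    spanEqv (parToSpan (pcomp f g)) (spanRepComp (parToSpan f) (parToSpan g)) := by
  classical
  refine ⟨⟨fun x => ⟨(⟨x.1, pcomp_dom1 x.2⟩, ⟨(f x.1).get (pcomp_dom1 x.2), pcomp_dom2 x.2 _⟩),
      rfl⟩,
    fun p => ⟨p.1.1.1, Part.dom_iff_mem.mpr ⟨(g p.1.2.1).get p.1.2.2, mem_pcomp.mpr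
      ⟨p.1.2.1, by
        have h2 : (f p.1.1.1).get p.1.1.2 = p.1.2.1 := p.2
        rw [← h2]; exact Part.get_mem _, Part.get_mem _⟩⟩⟩,
    fun x => Subtype.ext rfl,
    fun p => Subtype.ext (Prod.ext (Subtype.ext rfl) (Subtype.ext p.2))⟩,
    fun x => rfl, fun x => ?_⟩
  obtain ⟨y', hy', hz⟩ := mem_pcomp.mp (Part.get_mem x.2)
  have hy2 : y' = (f x.1).get (pcomp_dom1 x.2) := Part.mem_unique hy' (Part.get_mem _)
  rw [hy2] at hz
  exact Part.mem_unique (Part.get_mem _) hz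

theorem parTensor_dom1 {a b c d : ℕ} {f : parHom a b} {g : parHom c d} {x : Fin (2 ^ (a + c))}
    (h : (parTensor f g x).Dom) : (f (pow2Equiv a c x).1).Dom := by
  obtain ⟨q, hq⟩ := Part.dom_iff_mem.mp h
  obtain ⟨y, y', h1, h2, rfl⟩ := mem_parTensor.mp hq
  exact Part.dom_iff_mem.mpr ⟨y, h1⟩

theorem parTensor_dom2 {a b c d : ℕ} {f : parHom a b} {g : parHom c d} {x : Fin (2 ^ (a + c))}
    (h : (parTensor f g x).Dom) : (g (pow2Equiv a c x).2).Dom := by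
  obtain ⟨q, hq⟩ := Part.dom_iff_mem.mp h
  obtain ⟨y, y', h1, h2, rfl⟩ := mem_parTensor.mp hq
  exact Part.dom_iff_mem.mpr ⟨y', h2⟩

theorem parToSpan_tensor {a b c d : ℕ} (f : parHom a b) (g : parHom c d) :
    spanEqv (parToSpan (parTensor f g)) (spanRepTensor2 (parToSpan f) (parToSpan g)) := by
  classical
  refine ⟨⟨fun x => (⟨(pow2Equiv a c x.1).1, parTensor_dom1 x.2⟩,
      ⟨(pow2Equiv a c x.1).2, parTensor_dom2 x.2⟩),
    fun p => ⟨(pow2Equiv a c).symm (p.1.1, p.2.1), Part.dom_iff_mem.mpr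
      ⟨(pow2Equiv b d).symm ((f p.1.1).get p.1.2, (g p.2.1).get p.2.2),
        mem_parTensor.mpr ⟨(f p.1.1).get p.1.2, (g p.2.1).get p.2.2, by
          simp only [Equiv.apply_symm_apply]; exact Part.get_mem _, by
          simp only [Equiv.apply_symm_apply]; exact Part.get_mem _, rfl⟩⟩⟩,
    fun x => Subtype.ext (by simp), fun p => Prod.ext (Subtype.ext (by simp))
      (Subtype.ext (by simp))⟩, fun x => ?_, fun x => ?_⟩
  · show (pow2Equiv a c).symm ((pow2Equiv a c x.1).1, (pow2Equiv a c x.1).2) = x.1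
    simp
  · exact Part.mem_unique
      (mem_parTensor.mpr ⟨_, _, Part.get_mem (parTensor_dom1 x.2),
        Part.get_mem (parTensor_dom2 x.2), rfl⟩)
      (Part.get_mem x.2)

theorem parToSpan_swap (a b : ℕ) :
    spanEqv (parToSpan (pofFun (swapEquiv a b)))
      ({ carrier := Fin (2 ^ (a + b)), left := _root_.id,
         right := swapEquiv a b } : SpanRep (2 ^ (a + b)) (2 ^ (b + a))) := by
  exact ⟨Equiv.subtypeUnivEquiv fun _ => trivial, fun c => rfl, fun c => rfl⟩

theorem Pmap_hom : IsPROPHom FPar2Core FSpan2Core Pmap :=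
  ⟨fun n => Quot.sound (parToSpan_id n),
   fun a b c f g => Quot.sound (parToSpan_comp f g),
   fun a b c d f g => Quot.sound (parToSpan_tensor f g),
   fun a b => Quot.sound (parToSpan_swap a b)⟩

theorem swapEquiv_apply_swapEquiv (a b : ℕ) (x : Fin (2 ^ (b + a))) :
    swapEquiv a b (swapEquiv b a x) = x := by
  rw [← swapEquiv_symm b a, Equiv.symm_apply_apply]

theorem Popmap_hom : IsPROPHom FPar2opCore FSpan2Core Popmap := by
  refine ⟨fun n => ?_, fun a b c f g => ?_, fun a b c d f g => ?_, fun a b => ?_⟩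
  · exact Quot.sound (spanRev_eqv (parToSpan_id n))
  · exact Quot.sound (spanEqv_trans (spanRev_eqv (parToSpan_comp g f))
      (spanRev_comp (parToSpan g) (parToSpan f)))
  · exact Quot.sound (spanRev_eqv (parToSpan_tensor f g))
  · refine Quot.sound ⟨(Equiv.subtypeUnivEquiv fun _ => trivial).trans (swapEquiv b a),
      fun c => rfl, fun c => ?_⟩
    exact swapEquiv_apply_swapEquiv a b c.1

theorem square_eqv {a b : ℕ} (f : pinjHom a b) :
    spanEqv (spanRev (parToSpan (pinv f.1))) (parToSpan f.1) := by
  classical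
  refine ⟨⟨fun y => ⟨Exists.choose y.2, Part.dom_iff_mem.mpr ⟨y.1, Exists.choose_spec y.2⟩⟩,
    fun x => ⟨(f.1 x.1).get x.2, ⟨x.1, Part.get_mem x.2⟩⟩,
    fun y => Subtype.ext (Part.mem_unique (Part.get_mem _) (Exists.choose_spec y.2)),
    fun x => Subtype.ext (f.2 (Exists.choose_spec
      (⟨x.1, Part.get_mem x.2⟩ : ∃ x', (f.1 x.1).get x.2 ∈ f.1 x')) (Part.get_mem x.2))⟩,
    fun y => rfl,
    fun y => Part.mem_unique (Part.get_mem _) (Exists.choose_spec y.2)⟩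

theorem square_comm (a b : ℕ) (f : FPinj2Core.Hom a b) :
    Popmap a b (jopmap a b f) = Pmap a b (jmap a b f) := Quot.sound (square_eqv f)

end SpanLemmas
section Pushout

noncomputable def sIota {n m : ℕ} (s : SpanRep n m) :
    s.carrier → Fin (2 ^ Fintype.card s.carrier) :=
  fun c => Fin.castLE (Nat.lt_two_pow_self).le (Fintype.equivFin s.carrier c)

theorem sIota_inj {n m : ℕ} (s : SpanRep n m) : Function.Injective (sIota s) :=
  fun _ _ h => (Fintype.equivFin s.carrier).injective (Fin.castLE_injective _ h)

/-- Canonical left partial function of a span. -/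
noncomputable def gOf {n m : ℕ} (s : SpanRep (2 ^ n) (2 ^ m)) :
    parHom (Fintype.card s.carrier) n :=
  fun x => ⟨∃ c, sIota s c = x, fun h => s.left (Exists.choose h)⟩

/-- Canonical right partial function of a span. -/
noncomputable def hOf {n m : ℕ} (s : SpanRep (2 ^ n) (2 ^ m)) :
    parHom (Fintype.card s.carrier) m :=
  fun x => ⟨∃ c, sIota s c = x, fun h => s.right (Exists.choose h)⟩

/-- A pair of partial functions presenting a span. -/
def Adapted {n m : ℕ} (s : SpanRep (2 ^ n) (2 ^ m)) (d : ℕ)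
    (p : parHom d n) (q : parHom d m) : Prop :=
  ∃ j : s.carrier → Fin (2 ^ d), Function.Injective j ∧
    (∀ c, s.left c ∈ p (j c)) ∧ (∀ c, s.right c ∈ q (j c)) ∧
    (∀ x, (p x).Dom → ∃ c, j c = x) ∧ (∀ x, (q x).Dom → ∃ c, j c = x)

theorem adapted_gOf {n m : ℕ} (s : SpanRep (2 ^ n) (2 ^ m)) :
    Adapted s (Fintype.card s.carrier) (gOf s) (hOf s) := by
  classical
  refine ⟨sIota s, sIota_inj s, fun c => ?_, fun c => ?_, fun x h => h, fun x h => h⟩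
  · exact ⟨⟨c, rfl⟩, congrArg s.left (sIota_inj s (Exists.choose_spec (⟨c, rfl⟩ :
      ∃ c', sIota s c' = sIota s c)))⟩
  · exact ⟨⟨c, rfl⟩, congrArg s.right (sIota_inj s (Exists.choose_spec (⟨c, rfl⟩ :
      ∃ c', sIota s c' = sIota s c)))⟩

variable {Q : PROP.{w}}
  {F : ∀ a b : ℕ, FPar2opCore.Hom a b → Q.core.Hom a b}
  {G : ∀ a b : ℕ, FPar2Core.Hom a b → Q.core.Hom a b}

theorem master (hF : IsPROPHom FPar2opCore Q.core F) (hG : IsPROPHom FPar2Core Q.core G)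
    (hsq : ∀ (a b : ℕ) (f : FPinj2Core.Hom a b), F a b (jopmap a b f) = G a b (jmap a b f))
    {n m : ℕ} {s s' : SpanRep (2 ^ n) (2 ^ m)} (hss : spanEqv s s')
    {d d' : ℕ} {p : parHom d n} {q : parHom d m} {p' : parHom d' n} {q' : parHom d' m}
    (hA : Adapted s d p q) (hA' : Adapted s' d' p' q') :
    Q.core.comp (F n d p) (G d m q) = Q.core.comp (F n d' p') (G d' m q') := by
  classical
  obtain ⟨e, hel, her⟩ := hss
  obtain ⟨j, hj, hjl, hjr, hjp, hjq⟩ := hA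
  obtain ⟨j', hj', hjl', hjr', hjp', hjq'⟩ := hA'
  set u : parHom d d' :=
    fun x => ⟨(p x).Dom, fun hx => j' (e (Exists.choose (hjp x hx)))⟩ with hu_def
  have hu_j : ∀ c, j' (e c) ∈ u (j c) := by
    intro c
    have hx : (p (j c)).Dom := Part.dom_iff_mem.mpr ⟨_, hjl c⟩
    have hc : Exists.choose (hjp (j c) hx) = c := hj (Exists.choose_spec (hjp (j c) hx))
    exact ⟨hx, congrArg (fun c0 => j' (e c0)) hc⟩
  have u_inj : IsPInj u := by
    rintro x1 x2 z ⟨hx1, rfl⟩ ⟨hx2, heq⟩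
    have h12 : Exists.choose (hjp x1 hx1) = Exists.choose (hjp x2 hx2) :=
      e.injective (hj' heq.symm)
    rw [← Exists.choose_spec (hjp x1 hx1), ← Exists.choose_spec (hjp x2 hx2), h12]
  have hpu : p = pcomp u p' := by
    apply PFun.ext
    intro x y
    constructor
    · intro hy
      have hx : (p x).Dom := Part.dom_iff_mem.mpr ⟨y, hy⟩
      set c := Exists.choose (hjp x hx) with hc_def
      have hcx : j c = x := Exists.choose_spec (hjp x hx)
      have hyl : y = s.left c := Part.mem_unique hy (by rw [← hcx] at hy ⊢; exact hjl c)
      refine mem_pcomp.mpr ⟨j' (e c), ⟨hx, rfl⟩, ?_⟩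
      rw [hyl, ← hel c]
      exact hjl' (e c)
    · intro hy
      obtain ⟨z, hz, hyz⟩ := mem_pcomp.mp hy
      obtain ⟨hx, rfl⟩ := hz
      set c := Exists.choose (hjp x hx) with hc_def
      have hcx : j c = x := Exists.choose_spec (hjp x hx)
      have : y = s'.left (e c) := Part.mem_unique hyz (hjl' (e c))
      rw [this, hel c, ← hcx]
      exact hjl c
  have hqu : q = pcomp u q' := by
    apply PFun.ext
    intro x y
    constructor
    · intro hy
      obtain ⟨c0, hc0⟩ := hjq x (Part.dom_iff_mem.mpr ⟨y, hy⟩)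
      have hx : (p x).Dom := Part.dom_iff_mem.mpr ⟨_, by rw [← hc0]; exact hjl c0⟩
      set c := Exists.choose (hjp x hx) with hc_def
      have hcx : j c = x := Exists.choose_spec (hjp x hx)
      have hcc : c = c0 := hj (by rw [hcx, hc0])
      have hyr : y = s.right c := Part.mem_unique hy (by rw [← hcx] at hy ⊢; exact hjr c)
      refine mem_pcomp.mpr ⟨j' (e c), ⟨hx, rfl⟩, ?_⟩
      rw [hyr, ← her c]
      exact hjr' (e c)
    · intro hy
      obtain ⟨z, hz, hyz⟩ := mem_pcomp.mp hy
      obtain ⟨hx, rfl⟩ := hz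
      set c := Exists.choose (hjp x hx) with hc_def
      have hcx : j c = x := Exists.choose_spec (hjp x hx)
      have : y = s'.right (e c) := Part.mem_unique hyz (hjr' (e c))
      rw [this, her c, ← hcx]
      exact hjr c
  have habs : pcomp (pcomp (pinv u) u) q' = q' := by
    apply PFun.ext
    intro x' y
    constructor
    · intro hy
      obtain ⟨z, hz, hyz⟩ := mem_pcomp.mp hy
      obtain ⟨x0, hx0, hz0⟩ := mem_pcomp.mp hz
      have : z = x' := Part.mem_unique hz0 ((mem_pinv u_inj).mp hx0)
      rwa [this] at hyz
    · intro hy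
      obtain ⟨c', hc'⟩ := hjq' x' (Part.dom_iff_mem.mpr ⟨y, hy⟩)
      have hx' : x' ∈ u (j (e.symm c')) := by
        have := hu_j (e.symm c')
        rwa [e.apply_symm_apply, hc'] at this
      exact mem_pcomp.mpr ⟨x', mem_pcomp.mpr
        ⟨j (e.symm c'), (mem_pinv u_inj).mpr hx', hx'⟩, hy⟩
  have hFu : F d' d u = G d' d (pinv u) := by
    have h := hsq d' d ⟨pinv u, isPInj_pinv u⟩
    rwa [show jopmap d' d ⟨pinv u, isPInj_pinv u⟩ = u from pinv_pinv u_inj] at h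
  calc Q.core.comp (F n d p) (G d m q)
      = Q.core.comp (Q.core.comp (F n d' p') (F d' d u))
          (Q.core.comp (G d d' u) (G d' m q')) := by
        rw [hpu, hqu]
        exact congrArg₂ Q.core.comp (hF.2.1 n d' d p' u) (hG.2.1 d d' m u q')
    _ = Q.core.comp (F n d' p')
          (Q.core.comp (Q.core.comp (F d' d u) (G d d' u)) (G d' m q')) := by
        rw [Q.laws.assoc, Q.laws.assoc]
    _ = Q.core.comp (F n d' p')
          (Q.core.comp (G d' d' (pcomp (pinv u) u)) (G d' m q')) := by
        rw [hFu]
        exact congrArg (Q.core.comp (F n d' p'))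
          (congrArg (fun z => Q.core.comp z (G d' m q')) (hG.2.1 d' d d' (pinv u) u).symm)
    _ = Q.core.comp (F n d' p') (G d' m q') := by
        exact congrArg (Q.core.comp (F n d' p'))
          ((hG.2.1 d' d' m (pcomp (pinv u) u) q').symm.trans (congrArg (G d' m) habs))

end Pushout
theorem left_mem_gOf {n m : ℕ} (s : SpanRep (2 ^ n) (2 ^ m)) (c : s.carrier) :
    s.left c ∈ gOf s (sIota s c) :=
  ⟨⟨c, rfl⟩, congrArg s.left (sIota_inj s (Exists.choose_spec (⟨c, rfl⟩ :
      ∃ c', sIota s c' = sIota s c)))⟩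

theorem right_mem_hOf {n m : ℕ} (s : SpanRep (2 ^ n) (2 ^ m)) (c : s.carrier) :
    s.right c ∈ hOf s (sIota s c) :=
  ⟨⟨c, rfl⟩, congrArg s.right (sIota_inj s (Exists.choose_spec (⟨c, rfl⟩ :
      ∃ c', sIota s c' = sIota s c)))⟩

noncomputable def prestrict {X : Type} (D : X → Prop) : X →. X := fun x => ⟨D x, fun _ => x⟩

theorem mem_prestrict {X : Type} {D : X → Prop} {x y : X} :
    y ∈ prestrict D x ↔ D x ∧ y = x := by
  constructor
  · rintro ⟨h, rfl⟩; exact ⟨h, rfl⟩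
  · rintro ⟨h, rfl⟩; exact ⟨h, rfl⟩

theorem isPInj_prestrict {X : Type} (D : X → Prop) : IsPInj (prestrict D) := by
  rintro x1 x2 y ⟨h1, rfl⟩ ⟨h2, e⟩
  exact e.symm

theorem pinv_prestrict {X : Type} (D : X → Prop) : pinv (prestrict D) = prestrict D :=
  PFun.ext fun x y => by
    rw [mem_pinv (isPInj_prestrict D), mem_prestrict, mem_prestrict]
    constructor
    · rintro ⟨h, rfl⟩; exact ⟨h, rfl⟩
    · rintro ⟨h, rfl⟩; exact ⟨h, rfl⟩

theorem pcomp_prestrict {X Y : Type} (f : X →. Y) :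
    pcomp (prestrict fun x => (f x).Dom) f = f :=
  PFun.ext fun x y => by
    rw [mem_pcomp]
    constructor
    · rintro ⟨z, hz, hy⟩
      obtain ⟨-, rfl⟩ := mem_prestrict.mp hz
      exact hy
    · intro hy
      exact ⟨x, mem_prestrict.mpr ⟨Part.dom_iff_mem.mpr ⟨y, hy⟩, rfl⟩, hy⟩

section Pushout2

variable {Q : PROP.{w}}
  {F : ∀ a b : ℕ, FPar2opCore.Hom a b → Q.core.Hom a b}
  {G : ∀ a b : ℕ, FPar2Core.Hom a b → Q.core.Hom a b}

/-- The mediating map of the pushout. -/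
noncomputable def Hmap (hF : IsPROPHom FPar2opCore Q.core F)
    (hG : IsPROPHom FPar2Core Q.core G)
    (hsq : ∀ (a b : ℕ) (f : FPinj2Core.Hom a b), F a b (jopmap a b f) = G a b (jmap a b f)) :
    ∀ a b : ℕ, FSpan2Core.Hom a b → Q.core.Hom a b :=
  fun a b => Quot.lift
    (fun s => Q.core.comp (F a (Fintype.card s.carrier) (gOf s))
      (G (Fintype.card s.carrier) b (hOf s)))
    (fun s s' h => master hF hG hsq h (adapted_gOf s) (adapted_gOf s'))

variable (hF : IsPROPHom FPar2opCore Q.core F) (hG : IsPROPHom FPar2Core Q.core G)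
  (hsq : ∀ (a b : ℕ) (f : FPinj2Core.Hom a b), F a b (jopmap a b f) = G a b (jmap a b f))

theorem Hmap_adapted {n m : ℕ} {s : SpanRep (2 ^ n) (2 ^ m)} {d : ℕ}
    {p : parHom d n} {q : parHom d m} (h : Adapted s d p q) :
    Hmap hF hG hsq n m (sMk s) = Q.core.comp (F n d p) (G d m q) :=
  master hF hG hsq (spanEqv_refl s) (adapted_gOf s) h

theorem F_prestrict_eq_G
    (hsq : ∀ (a b : ℕ) (f : FPinj2Core.Hom a b), F a b (jopmap a b f) = G a b (jmap a b f))
    (d : ℕ) (D : Fin (2 ^ d) → Prop) :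
    F d d (prestrict D) = G d d (prestrict D) := by
  have h := hsq d d ⟨prestrict D, isPInj_prestrict D⟩
  rwa [show jopmap d d ⟨prestrict D, isPInj_prestrict D⟩ = prestrict D from
    pinv_prestrict D] at h

theorem adapted_parToSpan {n m : ℕ} (f : parHom n m) :
    Adapted (parToSpan f) n (prestrict fun x => (f x).Dom) f := by
  refine ⟨Subtype.val, Subtype.val_injective, fun c => ⟨c.2, rfl⟩,
    fun c => Part.get_mem c.2, fun x h => ⟨⟨x, h⟩, rfl⟩, fun x h => ⟨⟨x, h⟩, rfl⟩⟩

theorem Hmap_triangle_G (n m : ℕ) (f : FPar2Core.Hom n m) :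
    Hmap hF hG hsq n m (Pmap n m f) = G n m f := by
  have h1 := Hmap_adapted hF hG hsq (adapted_parToSpan f)
  rw [show Pmap n m f = sMk (parToSpan f) from rfl, h1,
    F_prestrict_eq_G hsq n (fun x => (f x).Dom)]
  exact (hG.2.1 n n m (prestrict fun x => (f x).Dom) f).symm.trans
    (congrArg (G n m) (pcomp_prestrict f))

theorem adapted_spanRev_parToSpan {a b : ℕ} (f : FPar2opCore.Hom a b) :
    Adapted (spanRev (parToSpan f)) b (f : parHom b a) (prestrict fun x => (f x).Dom) := by
  refine ⟨Subtype.val, Subtype.val_injective, fun c => Part.get_mem c.2,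
    fun c => ⟨c.2, rfl⟩, fun x h => ⟨⟨x, h⟩, rfl⟩, fun x h => ⟨⟨x, h⟩, rfl⟩⟩

theorem Hmap_triangle_F (a b : ℕ) (f : FPar2opCore.Hom a b) :
    Hmap hF hG hsq a b (Popmap a b f) = F a b f := by
  have h1 := Hmap_adapted hF hG hsq (adapted_spanRev_parToSpan f)
  rw [show Popmap a b f = sMk (spanRev (parToSpan f)) from rfl, h1,
    ← F_prestrict_eq_G hsq b (fun x => (f x).Dom)]
  exact (hF.2.1 a b b f (prestrict fun x => (f x).Dom)).symm.trans
    (congrArg (F a b) (pcomp_prestrict f))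

theorem adapted_id (n : ℕ) :
    Adapted (spanRepId (2 ^ n)) n (pid (Fin (2 ^ n))) (pid (Fin (2 ^ n))) := by
  refine ⟨fun c => c, fun _ _ h => h, fun c => Part.mem_some_iff.mpr rfl,
    fun c => Part.mem_some_iff.mpr rfl, fun x _ => ⟨x, rfl⟩, fun x _ => ⟨x, rfl⟩⟩

theorem Hmap_id (n : ℕ) : Hmap hF hG hsq n n (FSpan2Core.id n) = Q.core.id n := by
  have h1 := Hmap_adapted hF hG hsq (adapted_id n)
  have e1 : F n n (pid (Fin (2 ^ n))) = Q.core.id n := hF.1 n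
  have e2 : G n n (pid (Fin (2 ^ n))) = Q.core.id n := hG.1 n
  rw [show FSpan2Core.id n = sMk (spanRepId (2 ^ n)) from rfl, h1, e1, e2, Q.laws.id_comp]

theorem adapted_swap (a b : ℕ) :
    Adapted ({ carrier := Fin (2 ^ (a + b)), left := _root_.id, right := swapEquiv a b } :
        SpanRep (2 ^ (a + b)) (2 ^ (b + a)))
      (a + b) (pid (Fin (2 ^ (a + b)))) (pofFun (swapEquiv a b)) := by
  refine ⟨fun c => c, fun _ _ h => h, fun c => Part.mem_some_iff.mpr rfl,
    fun c => Part.mem_some_iff.mpr rfl, fun x _ => ⟨x, rfl⟩, fun x _ => ⟨x, rfl⟩⟩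

theorem Hmap_swap (a b : ℕ) :
    Hmap hF hG hsq (a + b) (b + a) (FSpan2Core.swap a b) = Q.core.swap a b := by
  have h1 := Hmap_adapted hF hG hsq (adapted_swap a b)
  have e1 : F (a + b) (a + b) (pid (Fin (2 ^ (a + b)))) = Q.core.id (a + b) := hF.1 (a + b)
  have e2 : G (a + b) (b + a) (pofFun (swapEquiv a b)) = Q.core.swap a b := hG.2.2.2 a b
  rw [show FSpan2Core.swap a b = sMk _ from rfl, h1, e1, e2, Q.laws.id_comp]

theorem adapted_tensor2 {a b c d : ℕ} (s : SpanRep (2 ^ a) (2 ^ b))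
    (t : SpanRep (2 ^ c) (2 ^ d)) :
    Adapted (spanRepTensor2 s t) (Fintype.card s.carrier + Fintype.card t.carrier)
      (parTensor (gOf s) (gOf t)) (parTensor (hOf s) (hOf t)) := by
  classical
  set ks := Fintype.card s.carrier
  set kt := Fintype.card t.carrier
  refine ⟨fun p => (pow2Equiv ks kt).symm (sIota s p.1, sIota t p.2), ?_, ?_, ?_, ?_, ?_⟩
  · intro p1 p2 h
    have h2 := (pow2Equiv ks kt).symm.injective h
    exact Prod.ext (sIota_inj s (congrArg Prod.fst h2)) (sIota_inj t (congrArg Prod.snd h2))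
  · intro p
    refine mem_parTensor.mpr ⟨s.left p.1, t.left p.2, ?_, ?_, rfl⟩
    · rw [Equiv.apply_symm_apply]; exact left_mem_gOf s p.1
    · rw [Equiv.apply_symm_apply]; exact left_mem_gOf t p.2
  · intro p
    refine mem_parTensor.mpr ⟨s.right p.1, t.right p.2, ?_, ?_, rfl⟩
    · rw [Equiv.apply_symm_apply]; exact right_mem_hOf s p.1
    · rw [Equiv.apply_symm_apply]; exact right_mem_hOf t p.2
  · intro x h
    obtain ⟨c, hc⟩ := parTensor_dom1 h
    obtain ⟨c', hc'⟩ := parTensor_dom2 h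
    refine ⟨(c, c'), ?_⟩
    show (pow2Equiv ks kt).symm (sIota s c, sIota t c') = x
    rw [hc, hc']
    exact (pow2Equiv _ _).symm_apply_apply x
  · intro x h
    obtain ⟨c, hc⟩ := parTensor_dom1 h
    obtain ⟨c', hc'⟩ := parTensor_dom2 h
    refine ⟨(c, c'), ?_⟩
    show (pow2Equiv ks kt).symm (sIota s c, sIota t c') = x
    rw [hc, hc']
    exact (pow2Equiv _ _).symm_apply_apply x

theorem Hmap_tensor {a b c d : ℕ} (σ : FSpan2Core.Hom a b) (τ : FSpan2Core.Hom c d) :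
    Hmap hF hG hsq (a + c) (b + d) (FSpan2Core.tensor σ τ) =
      Q.core.tensor (Hmap hF hG hsq a b σ) (Hmap hF hG hsq c d τ) := by
  induction σ using Quot.ind with | _ s => ?_
  induction τ using Quot.ind with | _ t => ?_
  have h1 := Hmap_adapted hF hG hsq (adapted_tensor2 s t)
  refine Eq.trans h1 ?_
  have h2 : F (a + c) (Fintype.card s.carrier + Fintype.card t.carrier)
      (parTensor (gOf s) (gOf t)) = Q.core.tensor (F a _ (gOf s)) (F c _ (gOf t)) :=
    hF.2.2.1 a (Fintype.card s.carrier) c (Fintype.card t.carrier) (gOf s) (gOf t)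
  have h3 : G (Fintype.card s.carrier + Fintype.card t.carrier) (b + d)
      (parTensor (hOf s) (hOf t)) = Q.core.tensor (G _ b (hOf s)) (G _ d (hOf t)) :=
    hG.2.2.1 (Fintype.card s.carrier) b (Fintype.card t.carrier) d (hOf s) (hOf t)
  rw [h2, h3, ← Q.laws.tensor_comp]
  rfl

end Pushout2
noncomputable def pdel (d : ℕ) : parHom d 0 := fun _ => Part.some ⟨0, Nat.one_pos⟩

noncomputable def pproj (m d : ℕ) : parHom (m + d) m := parTensor (pid (Fin (2 ^ m))) (pdel d)

noncomputable def pprojR (m d : ℕ) : parHom (m + d) d :=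
  pcomp (pofFun (swapEquiv m d)) (pproj d m)

noncomputable def pgraph {d m : ℕ} (h : parHom d m) : parHom d (m + d) :=
  fun x => ⟨(h x).Dom, fun hx => (pow2Equiv m d).symm ((h x).get hx, x)⟩

theorem mem_pdel {d : ℕ} (x : Fin (2 ^ d)) (y : Fin (2 ^ 0)) : y ∈ pdel d x := by
  haveI : Subsingleton (Fin (2 ^ 0)) := by
    have h : (2 : ℕ) ^ 0 = 1 := pow_zero 2
    rw [h]; infer_instance
  exact Part.mem_some_iff.mpr (Subsingleton.elim _ _)

theorem pow2Equiv_zero_symm (m : ℕ) (v : Fin (2 ^ m)) (c : Fin (2 ^ 0)) :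
    (pow2Equiv m 0).symm (v, c) = v := by
  apply Fin.ext
  simp [pow2Equiv, finProdFinEquiv, Fin.ext_iff]

theorem mem_pproj {m d : ℕ} {x : Fin (2 ^ (m + d))} {y : Fin (2 ^ m)} :
    y ∈ pproj m d x ↔ y = (pow2Equiv m d x).1 := by
  erw [show pproj m d x = parTensor (pid (Fin (2 ^ m))) (pdel d) x from rfl, mem_parTensor]
  constructor
  · rintro ⟨y1, y2, h1, -, rfl⟩
    rw [pow2Equiv_zero_symm]
    exact mem_pid.mp h1
  · rintro rfl
    exact ⟨_, ⟨0, Nat.one_pos⟩, mem_pid.mpr rfl, mem_pdel _ _, (pow2Equiv_zero_symm _ _ _).symm⟩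

theorem pow2Equiv_swapEquiv (m d : ℕ) (x : Fin (2 ^ (m + d))) :
    pow2Equiv d m (swapEquiv m d x) = ((pow2Equiv m d x).2, (pow2Equiv m d x).1) := by
  show pow2Equiv d m ((pow2Equiv d m).symm (Prod.swap (pow2Equiv m d x))) = _
  rw [Equiv.apply_symm_apply]
  rfl

theorem mem_pprojR {m d : ℕ} {x : Fin (2 ^ (m + d))} {y : Fin (2 ^ d)} :
    y ∈ pprojR m d x ↔ y = (pow2Equiv m d x).2 := by
  erw [show pprojR m d x = pcomp (pofFun (swapEquiv m d)) (pproj d m) x from rfl, mem_pcomp]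
  constructor
  · rintro ⟨z, hz, hy⟩
    obtain rfl := mem_pofFun.mp hz
    rw [mem_pproj, pow2Equiv_swapEquiv] at hy
    exact hy
  · rintro rfl
    exact ⟨swapEquiv m d x, mem_pofFun.mpr rfl,
      mem_pproj.mpr (by rw [pow2Equiv_swapEquiv])⟩

theorem mem_pgraph {d m : ℕ} {h : parHom d m} {x : Fin (2 ^ d)} {y : Fin (2 ^ (m + d))} :
    y ∈ pgraph h x ↔ ∃ v, v ∈ h x ∧ y = (pow2Equiv m d).symm (v, x) := by
  constructor
  · rintro ⟨hx, rfl⟩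
    exact ⟨(h x).get hx, @Part.get_mem _ (h x) hx, rfl⟩
  · rintro ⟨v, hv, rfl⟩
    have hx : (h x).Dom := Part.dom_iff_mem.mpr ⟨v, hv⟩
    refine ⟨hx, ?_⟩
    show (pow2Equiv m d).symm ((h x).get hx, x) = (pow2Equiv m d).symm (v, x)
    rw [Part.mem_unique (@Part.get_mem _ (h x) hx) hv]

theorem isPInj_pgraph {d m : ℕ} (h : parHom d m) : IsPInj (pgraph h) := by
  intro x1 x2 y h1 h2
  obtain ⟨v1, -, rfl⟩ := mem_pgraph.mp h1
  obtain ⟨v2, -, he⟩ := mem_pgraph.mp h2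
  exact congrArg Prod.snd ((pow2Equiv m d).symm.injective he)

theorem pgraph_decomp {d m : ℕ} (h : parHom d m) : pcomp (pgraph h) (pproj m d) = h := by
  apply PFun.ext
  intro x y
  erw [mem_pcomp]
  constructor
  · rintro ⟨z, hz, hy⟩
    obtain ⟨v, hv, rfl⟩ := mem_pgraph.mp hz
    rw [mem_pproj, Equiv.apply_symm_apply] at hy
    rwa [hy]
  · intro hy
    exact ⟨(pow2Equiv m d).symm (y, x), mem_pgraph.mpr ⟨y, hy, rfl⟩,
      mem_pproj.mpr (by rw [Equiv.apply_symm_apply])⟩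

section QCast

variable {Q : PROP.{w}}

theorem cast_comp_cast (Q : PROP.{w}) {a a' b b' c c' : ℕ} (ha : a = a') (hb : b = b')
    (hc : c = c') (f : Q.core.Hom a b) (g : Q.core.Hom b c) :
    Q.core.comp (Q.core.cast ha hb f) (Q.core.cast hb hc g) =
      Q.core.cast ha hc (Q.core.comp f g) := by
  subst ha; subst hb; subst hc; rfl

theorem cast_heq' (Q : PROP.{w}) {a a' b b' : ℕ} (ha : a = a') (hb : b = b')
    (f : Q.core.Hom a b) : HEq (Q.core.cast ha hb f) f := by
  subst ha; subst hb; rfl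

theorem Q_phi_psi (Q : PROP.{w}) {a b : ℕ} (φ : Q.core.Hom a 0) (ψ : Q.core.Hom 0 b) :
    Q.core.comp (Q.core.tensor (Q.core.id a) ψ)
      (Q.core.comp (Q.core.swap a b) (Q.core.tensor (Q.core.id b) φ)) =
    Q.core.comp φ ψ := by
  have c1 : Q.core.comp (Q.core.tensor (Q.core.id a) ψ) (Q.core.swap a b) =
      Q.core.comp (Q.core.swap a 0) (Q.core.tensor ψ (Q.core.id a)) :=
    Q.laws.swap_natural (Q.core.id a) ψ
  have c2 : Q.core.comp (Q.core.tensor ψ (Q.core.id a)) (Q.core.tensor (Q.core.id b) φ) =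
      Q.core.tensor ψ φ := by
    have h := Q.laws.tensor_comp ψ (Q.core.id b) (Q.core.id a) φ
    rw [Q.laws.comp_id, Q.laws.id_comp] at h
    exact h.symm
  have c3 : Q.core.tensor ψ φ =
      Q.core.comp (Q.core.tensor (Q.core.id 0) φ) (Q.core.tensor ψ (Q.core.id 0)) := by
    have h := Q.laws.tensor_comp (Q.core.id 0) ψ φ (Q.core.id 0)
    rw [Q.laws.id_comp, Q.laws.comp_id] at h
    exact h
  have hcast : Q.core.cast rfl (Nat.zero_add 0).symm φ = φ :=
    eq_of_heq (cast_heq' Q rfl (Nat.zero_add 0).symm φ)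
  rw [← Q.laws.assoc, c1, Q.laws.assoc, c2, c3, ← Q.laws.assoc, Q.laws.tensor_unit_right,
    Q.laws.swap_zero, Q.laws.tensor_unit_left, cast_comp_cast, Q.laws.id_comp, hcast]

end QCast
noncomputable def Wmap (m a b : ℕ) : parHom (m + (a + b)) (m + a) :=
  parTensor (pid (Fin (2 ^ m))) (pproj a b)

noncomputable def Zmap (m a b : ℕ) : parHom (m + (a + b)) (m + b) :=
  parTensor (pid (Fin (2 ^ m))) (pprojR a b)

theorem mem_Wmap {m a b : ℕ} {x : Fin (2 ^ (m + (a + b)))} {w : Fin (2 ^ (m + a))} :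
    w ∈ Wmap m a b x ↔ w = (pow2Equiv m a).symm ((pow2Equiv m (a + b) x).1,
      (pow2Equiv a b (pow2Equiv m (a + b) x).2).1) := by
  erw [show Wmap m a b x = parTensor (pid (Fin (2 ^ m))) (pproj a b) x from rfl, mem_parTensor]
  constructor
  · rintro ⟨y1, y2, h1, h2, rfl⟩
    rw [mem_pid.mp h1, mem_pproj.mp h2]
  · rintro rfl
    exact ⟨_, _, mem_pid.mpr rfl, mem_pproj.mpr rfl, rfl⟩

theorem mem_Zmap {m a b : ℕ} {x : Fin (2 ^ (m + (a + b)))} {w : Fin (2 ^ (m + b))} :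
    w ∈ Zmap m a b x ↔ w = (pow2Equiv m b).symm ((pow2Equiv m (a + b) x).1,
      (pow2Equiv a b (pow2Equiv m (a + b) x).2).2) := by
  erw [show Zmap m a b x = parTensor (pid (Fin (2 ^ m))) (pprojR a b) x from rfl, mem_parTensor]
  constructor
  · rintro ⟨y1, y2, h1, h2, rfl⟩
    rw [mem_pid.mp h1, mem_pprojR.mp h2]
  · rintro rfl
    exact ⟨_, _, mem_pid.mpr rfl, mem_pprojR.mpr rfl, rfl⟩

theorem mem_pWpinv {m a b : ℕ} (hs : parHom a m) {x : Fin (2 ^ (m + (a + b)))}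
    {z : Fin (2 ^ a)} :
    z ∈ pcomp (Wmap m a b) (pinv (pgraph hs)) x ↔
      z = (pow2Equiv a b (pow2Equiv m (a + b) x).2).1 ∧
        (pow2Equiv m (a + b) x).1 ∈ hs z := by
  erw [mem_pcomp]
  constructor
  · rintro ⟨w, hw, hz⟩
    obtain rfl := mem_Wmap.mp hw
    rw [mem_pinv (isPInj_pgraph hs), mem_pgraph] at hz
    obtain ⟨v, hv, he⟩ := hz
    have h2 := (pow2Equiv m a).symm.injective he
    obtain ⟨h3, h4⟩ := Prod.mk.injEq .. ▸ h2
    exact ⟨h4.symm, by rw [h3]; exact hv⟩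
  · rintro ⟨rfl, hv⟩
    refine ⟨_, mem_Wmap.mpr rfl, ?_⟩
    rw [mem_pinv (isPInj_pgraph hs), mem_pgraph]
    exact ⟨_, hv, rfl⟩

theorem mem_pZpinv {m a b : ℕ} (gt : parHom b m) {x : Fin (2 ^ (m + (a + b)))}
    {z : Fin (2 ^ b)} :
    z ∈ pcomp (Zmap m a b) (pinv (pgraph gt)) x ↔
      z = (pow2Equiv a b (pow2Equiv m (a + b) x).2).2 ∧
        (pow2Equiv m (a + b) x).1 ∈ gt z := by
  erw [mem_pcomp]
  constructor
  · rintro ⟨w, hw, hz⟩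
    obtain rfl := mem_Zmap.mp hw
    rw [mem_pinv (isPInj_pgraph gt), mem_pgraph] at hz
    obtain ⟨v, hv, he⟩ := hz
    have h2 := (pow2Equiv m b).symm.injective he
    obtain ⟨h3, h4⟩ := Prod.mk.injEq .. ▸ h2
    exact ⟨h4.symm, by rw [h3]; exact hv⟩
  · rintro ⟨rfl, hv⟩
    refine ⟨_, mem_Zmap.mpr rfl, ?_⟩
    rw [mem_pinv (isPInj_pgraph gt), mem_pgraph]
    exact ⟨_, hv, rfl⟩

theorem mem_pcomp_prestrict {X Y : Type} {D : X → Prop} {P : X →. Y} {x : X} {y : Y} :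
    y ∈ pcomp (prestrict D) P x ↔ D x ∧ y ∈ P x := by
  rw [mem_pcomp]
  constructor
  · rintro ⟨z, hz, hy⟩
    obtain ⟨hD, rfl⟩ := mem_prestrict.mp hz
    exact ⟨hD, hy⟩
  · rintro ⟨hD, hy⟩
    exact ⟨x, mem_prestrict.mpr ⟨hD, rfl⟩, hy⟩

theorem pcomp_prestrict_of {X Y : Type} {D : X → Prop} {P : X →. Y}
    (h : ∀ x, (P x).Dom → D x) : pcomp (prestrict D) P = P :=
  PFun.ext fun x y => by
    rw [mem_pcomp_prestrict]
    exact ⟨fun h2 => h2.2, fun h2 => ⟨h x (Part.dom_iff_mem.mpr ⟨y, h2⟩), h2⟩⟩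

theorem dom_pcomp_prestrict {X Y : Type} {D : X → Prop} {P : X →. Y} {x : X} :
    (pcomp (prestrict D) P x).Dom ↔ D x ∧ (P x).Dom := by
  rw [Part.dom_iff_mem]
  constructor
  · rintro ⟨y, hy⟩
    obtain ⟨hD, hy⟩ := mem_pcomp_prestrict.mp hy
    exact ⟨hD, Part.dom_iff_mem.mpr ⟨y, hy⟩⟩
  · rintro ⟨hD, hP⟩
    exact ⟨(P x).get hP, mem_pcomp_prestrict.mpr ⟨hD, Part.get_mem hP⟩⟩

section Pushout3

variable {Q : PROP.{w}}
  {F : ∀ a b : ℕ, FPar2opCore.Hom a b → Q.core.Hom a b}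
  {G : ∀ a b : ℕ, FPar2Core.Hom a b → Q.core.Hom a b}

variable (hF : IsPROPHom FPar2opCore Q.core F) (hG : IsPROPHom FPar2Core Q.core G)
  (hsq : ∀ (a b : ℕ) (f : FPinj2Core.Hom a b), F a b (jopmap a b f) = G a b (jmap a b f))

include hF hG hsq

theorem exchangeFG (m a b : ℕ) (hs : parHom a m) (gt : parHom b m) :
    Q.core.comp (G a m hs) (F m b gt) =
      Q.core.comp (F a (m + (a + b)) (pcomp (Wmap m a b) (pinv (pgraph hs))))
        (G (m + (a + b)) b (pcomp (Zmap m a b) (pinv (pgraph gt)))) := by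
  have hGγ : F a (m + a) (pinv (pgraph hs)) = G a (m + a) (pgraph hs) :=
    hsq a (m + a) ⟨pgraph hs, isPInj_pgraph hs⟩
  have hFγ' : F (m + b) b (pgraph gt) = G (m + b) b (pinv (pgraph gt)) := by
    have h := hsq (m + b) b ⟨pinv (pgraph gt), isPInj_pinv (pgraph gt)⟩
    rwa [show jopmap (m + b) b ⟨pinv (pgraph gt), isPInj_pinv (pgraph gt)⟩ = pgraph gt from
      pinv_pinv (isPInj_pgraph gt)] at h
  have A1 : G a m hs = Q.core.comp (F a (m + a) (pinv (pgraph hs)))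
      (G (m + a) m (pproj m a)) := by
    have h2 : G a m hs = G a m (pcomp (pgraph hs) (pproj m a)) :=
      congrArg (G a m) (pgraph_decomp hs).symm
    have h := hG.2.1 a (m + a) m (pgraph hs) (pproj m a)
    rw [← hGγ] at h
    exact h2.trans h
  have A2 : F m b gt = Q.core.comp (F m (m + b) (pproj m b))
      (G (m + b) b (pinv (pgraph gt))) := by
    have h2 : F m b gt = F m b (pcomp (pgraph gt) (pproj m b)) :=
      congrArg (F m b) (pgraph_decomp gt).symm
    have h := hF.2.1 m (m + b) b (pproj m b) (pgraph gt)
    rw [hFγ'] at h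
    exact h2.trans h
  have B3 : ∀ {c d e : ℕ} (f : Q.core.Hom c d) (g : Q.core.Hom d e),
      Q.core.comp (Q.core.tensor (Q.core.id m) f) (Q.core.tensor (Q.core.id m) g) =
        Q.core.tensor (Q.core.id m) (Q.core.comp f g) := by
    intro c d e f g
    have h := Q.laws.tensor_comp (Q.core.id m) (Q.core.id m) f g
    rw [Q.laws.id_comp] at h
    exact h.symm
  have B1 : G (m + a) m (pproj m a) = Q.core.tensor (Q.core.id m) (G a 0 (pdel a)) := by
    have h : G (m + a) m (pproj m a) =
        Q.core.tensor (G m m (pid (Fin (2 ^ m)))) (G a 0 (pdel a)) :=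
      hG.2.2.1 m m a 0 (pid (Fin (2 ^ m))) (pdel a)
    rw [h, show G m m (pid (Fin (2 ^ m))) = Q.core.id m from hG.1 m]
  have B2 : F m (m + b) (pproj m b) = Q.core.tensor (Q.core.id m) (F 0 b (pdel b)) := by
    have h : F m (m + b) (pproj m b) =
        Q.core.tensor (F m m (pid (Fin (2 ^ m)))) (F 0 b (pdel b)) :=
      hF.2.2.1 m m 0 b (pid (Fin (2 ^ m))) (pdel b)
    rw [h, show F m m (pid (Fin (2 ^ m))) = Q.core.id m from hF.1 m]
  have e1 : F a (a + b) (pproj a b) = Q.core.tensor (Q.core.id a) (F 0 b (pdel b)) := by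
    have h : F a (a + b) (pproj a b) =
        Q.core.tensor (F a a (pid (Fin (2 ^ a)))) (F 0 b (pdel b)) :=
      hF.2.2.1 a a 0 b (pid (Fin (2 ^ a))) (pdel b)
    rw [h, show F a a (pid (Fin (2 ^ a))) = Q.core.id a from hF.1 a]
  have e2 : G (a + b) b (pprojR a b) =
      Q.core.comp (Q.core.swap a b) (Q.core.tensor (Q.core.id b) (G a 0 (pdel a))) := by
    have h : G (a + b) b (pprojR a b) =
        Q.core.comp (G (a + b) (b + a) (pofFun (swapEquiv a b))) (G (b + a) b (pproj b a)) :=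
      hG.2.1 (a + b) (b + a) b (pofFun (swapEquiv a b)) (pproj b a)
    have h2 : G (b + a) b (pproj b a) =
        Q.core.tensor (G b b (pid (Fin (2 ^ b)))) (G a 0 (pdel a)) :=
      hG.2.2.1 b b a 0 (pid (Fin (2 ^ b))) (pdel a)
    rw [h, h2, show G (a + b) (b + a) (pofFun (swapEquiv a b)) = Q.core.swap a b from
      hG.2.2.2 a b, show G b b (pid (Fin (2 ^ b))) = Q.core.id b from hG.1 b]
  have B4 : Q.core.comp (G a 0 (pdel a)) (F 0 b (pdel b)) =
      Q.core.comp (F a (a + b) (pproj a b)) (G (a + b) b (pprojR a b)) := by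
    rw [e1, e2]
    exact (Q_phi_psi Q (G a 0 (pdel a)) (F 0 b (pdel b))).symm
  have B5F : F (m + a) (m + (a + b)) (Wmap m a b) =
      Q.core.tensor (Q.core.id m) (F a (a + b) (pproj a b)) := by
    have h : F (m + a) (m + (a + b)) (Wmap m a b) =
        Q.core.tensor (F m m (pid (Fin (2 ^ m)))) (F a (a + b) (pproj a b)) :=
      hF.2.2.1 m m a (a + b) (pid (Fin (2 ^ m))) (pproj a b)
    rw [h, show F m m (pid (Fin (2 ^ m))) = Q.core.id m from hF.1 m]
  have B5G : G (m + (a + b)) (m + b) (Zmap m a b) =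
      Q.core.tensor (Q.core.id m) (G (a + b) b (pprojR a b)) := by
    have h : G (m + (a + b)) (m + b) (Zmap m a b) =
        Q.core.tensor (G m m (pid (Fin (2 ^ m)))) (G (a + b) b (pprojR a b)) :=
      hG.2.2.1 m m (a + b) b (pid (Fin (2 ^ m))) (pprojR a b)
    rw [h, show G m m (pid (Fin (2 ^ m))) = Q.core.id m from hG.1 m]
  have A3 : Q.core.comp (G (m + a) m (pproj m a)) (F m (m + b) (pproj m b)) =
      Q.core.comp (F (m + a) (m + (a + b)) (Wmap m a b))
        (G (m + (a + b)) (m + b) (Zmap m a b)) := by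
    rw [B1, B2, B3, B4, ← B3, ← B5F, ← B5G]
  calc Q.core.comp (G a m hs) (F m b gt)
      = Q.core.comp (Q.core.comp (F a (m + a) (pinv (pgraph hs))) (G (m + a) m (pproj m a)))
          (Q.core.comp (F m (m + b) (pproj m b)) (G (m + b) b (pinv (pgraph gt)))) := by
        rw [← A1, ← A2]
    _ = Q.core.comp (F a (m + a) (pinv (pgraph hs)))
          (Q.core.comp (Q.core.comp (G (m + a) m (pproj m a)) (F m (m + b) (pproj m b)))
            (G (m + b) b (pinv (pgraph gt)))) := by
        rw [Q.laws.assoc, ← Q.laws.assoc (G (m + a) m (pproj m a))]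
    _ = Q.core.comp (F a (m + a) (pinv (pgraph hs)))
          (Q.core.comp (Q.core.comp (F (m + a) (m + (a + b)) (Wmap m a b))
            (G (m + (a + b)) (m + b) (Zmap m a b))) (G (m + b) b (pinv (pgraph gt)))) := by
        rw [A3]
    _ = Q.core.comp (Q.core.comp (F a (m + a) (pinv (pgraph hs)))
            (F (m + a) (m + (a + b)) (Wmap m a b)))
          (Q.core.comp (G (m + (a + b)) (m + b) (Zmap m a b))
            (G (m + b) b (pinv (pgraph gt)))) := by
        rw [Q.laws.assoc, ← Q.laws.assoc]
    _ = Q.core.comp (F a (m + (a + b)) (pcomp (Wmap m a b) (pinv (pgraph hs))))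
          (G (m + (a + b)) b (pcomp (Zmap m a b) (pinv (pgraph gt)))) := by
        rw [← hF.2.1 a (m + a) (m + (a + b)) (pinv (pgraph hs)) (Wmap m a b),
          ← hG.2.1 (m + (a + b)) (m + b) b (Zmap m a b) (pinv (pgraph gt))]
        rfl

theorem normalizeFG {nn mm d : ℕ} (P : parHom d nn) (R : parHom d mm) :
    Q.core.comp (F nn d P) (G d mm R) =
      Q.core.comp (F nn d (pcomp (prestrict fun x => (P x).Dom ∧ (R x).Dom) P))
        (G d mm (pcomp (prestrict fun x => (P x).Dom ∧ (R x).Dom) R)) := by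
  have s1 : F nn d P = Q.core.comp (F nn d P) (G d d (prestrict fun x => (P x).Dom)) := by
    have h := hF.2.1 nn d d P (prestrict fun x => (P x).Dom)
    rw [F_prestrict_eq_G hsq] at h
    exact (congrArg (F nn d) (pcomp_prestrict_of fun x hx => hx).symm).trans h
  have step1 : Q.core.comp (F nn d P) (G d mm R) =
      Q.core.comp (F nn d P) (G d mm (pcomp (prestrict fun x => (P x).Dom) R)) := by
    calc Q.core.comp (F nn d P) (G d mm R)
        = Q.core.comp (Q.core.comp (F nn d P) (G d d (prestrict fun x => (P x).Dom)))
            (G d mm R) := congrArg (fun z => Q.core.comp z (G d mm R)) s1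
      _ = Q.core.comp (F nn d P)
            (Q.core.comp (G d d (prestrict fun x => (P x).Dom)) (G d mm R)) :=
          Q.laws.assoc _ _ _
      _ = Q.core.comp (F nn d P) (G d mm (pcomp (prestrict fun x => (P x).Dom) R)) :=
          congrArg (Q.core.comp (F nn d P))
            (hG.2.1 d d mm (prestrict fun x => (P x).Dom) R).symm
  have s2 : G d mm (pcomp (prestrict fun x => (P x).Dom) R) =
      Q.core.comp
        (F d d (prestrict fun x => (pcomp (prestrict fun x' => (P x').Dom) R x).Dom))
        (G d mm (pcomp (prestrict fun x => (P x).Dom) R)) := by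
    have h := hG.2.1 d d mm
      (prestrict fun x => (pcomp (prestrict fun x' => (P x').Dom) R x).Dom)
      (pcomp (prestrict fun x => (P x).Dom) R)
    rw [← F_prestrict_eq_G hsq] at h
    exact (congrArg (G d mm) (pcomp_prestrict_of fun x hx => hx).symm).trans h
  have step2 : Q.core.comp (F nn d P) (G d mm (pcomp (prestrict fun x => (P x).Dom) R)) =
      Q.core.comp
        (F nn d (pcomp (prestrict fun x =>
          (pcomp (prestrict fun x' => (P x').Dom) R x).Dom) P))
        (G d mm (pcomp (prestrict fun x => (P x).Dom) R)) := by
    calc Q.core.comp (F nn d P) (G d mm (pcomp (prestrict fun x => (P x).Dom) R))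
        = Q.core.comp (F nn d P) (Q.core.comp
            (F d d (prestrict fun x => (pcomp (prestrict fun x' => (P x').Dom) R x).Dom))
            (G d mm (pcomp (prestrict fun x => (P x).Dom) R))) :=
          congrArg (Q.core.comp (F nn d P)) s2
      _ = Q.core.comp (Q.core.comp (F nn d P)
            (F d d (prestrict fun x => (pcomp (prestrict fun x' => (P x').Dom) R x).Dom)))
            (G d mm (pcomp (prestrict fun x => (P x).Dom) R)) := (Q.laws.assoc _ _ _).symm
      _ = Q.core.comp
            (F nn d (pcomp (prestrict fun x =>
              (pcomp (prestrict fun x' => (P x').Dom) R x).Dom) P))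
            (G d mm (pcomp (prestrict fun x => (P x).Dom) R)) :=
          congrArg (fun z => Q.core.comp z
              (G d mm (pcomp (prestrict fun x => (P x).Dom) R)))
            (hF.2.1 nn d d P (prestrict fun x =>
              (pcomp (prestrict fun x' => (P x').Dom) R x).Dom)).symm
  have eqP : pcomp (prestrict fun x => (pcomp (prestrict fun x' => (P x').Dom) R x).Dom) P =
      pcomp (prestrict fun x => (P x).Dom ∧ (R x).Dom) P := by
    apply PFun.ext
    intro x y
    erw [mem_pcomp_prestrict, mem_pcomp_prestrict, dom_pcomp_prestrict]
  have eqR : pcomp (prestrict fun x => (P x).Dom) R =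
      pcomp (prestrict fun x => (P x).Dom ∧ (R x).Dom) R := by
    apply PFun.ext
    intro x y
    erw [mem_pcomp_prestrict, mem_pcomp_prestrict]
    constructor
    · rintro ⟨h1, h2⟩; exact ⟨⟨h1, Part.dom_iff_mem.mpr ⟨y, h2⟩⟩, h2⟩
    · rintro ⟨⟨h1, -⟩, h2⟩; exact ⟨h1, h2⟩
  rw [step1, step2, eqP, eqR]

end Pushout3
theorem mem_P1gen {n m : ℕ} {a b : ℕ} (gs : parHom a n) (hs : parHom a m)
    {x : Fin (2 ^ (m + (a + b)))} {y : Fin (2 ^ n)} :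
    y ∈ pcomp (pcomp (Wmap m a b) (pinv (pgraph hs))) gs x ↔
      (pow2Equiv m (a + b) x).1 ∈ hs (pow2Equiv a b (pow2Equiv m (a + b) x).2).1 ∧
        y ∈ gs (pow2Equiv a b (pow2Equiv m (a + b) x).2).1 := by
  erw [mem_pcomp]
  constructor
  · rintro ⟨z, hz, hy⟩
    obtain ⟨rfl, hu⟩ := (mem_pWpinv hs).mp hz
    exact ⟨hu, hy⟩
  · rintro ⟨hu, hy⟩
    exact ⟨_, (mem_pWpinv hs).mpr ⟨rfl, hu⟩, hy⟩

theorem mem_R1gen {m p : ℕ} {a b : ℕ} (gt : parHom b m) (ht : parHom b p)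
    {x : Fin (2 ^ (m + (a + b)))} {y : Fin (2 ^ p)} :
    y ∈ pcomp (pcomp (Zmap m a b) (pinv (pgraph gt))) ht x ↔
      (pow2Equiv m (a + b) x).1 ∈ gt (pow2Equiv a b (pow2Equiv m (a + b) x).2).2 ∧
        y ∈ ht (pow2Equiv a b (pow2Equiv m (a + b) x).2).2 := by
  erw [mem_pcomp]
  constructor
  · rintro ⟨z, hz, hy⟩
    obtain ⟨rfl, hu⟩ := (mem_pZpinv gt).mp hz
    exact ⟨hu, hy⟩
  · rintro ⟨hu, hy⟩
    exact ⟨_, (mem_pZpinv gt).mpr ⟨rfl, hu⟩, hy⟩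

noncomputable def P1of {n m p : ℕ} (s : SpanRep (2 ^ n) (2 ^ m)) (t : SpanRep (2 ^ m) (2 ^ p)) :
    parHom (m + (Fintype.card s.carrier + Fintype.card t.carrier)) n :=
  pcomp (pcomp (Wmap m (Fintype.card s.carrier) (Fintype.card t.carrier))
    (pinv (pgraph (hOf s)))) (gOf s)

noncomputable def R1of {n m p : ℕ} (s : SpanRep (2 ^ n) (2 ^ m)) (t : SpanRep (2 ^ m) (2 ^ p)) :
    parHom (m + (Fintype.card s.carrier + Fintype.card t.carrier)) p :=
  pcomp (pcomp (Zmap m (Fintype.card s.carrier) (Fintype.card t.carrier))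
    (pinv (pgraph (gOf t)))) (hOf t)

noncomputable def Eof {n m p : ℕ} (s : SpanRep (2 ^ n) (2 ^ m)) (t : SpanRep (2 ^ m) (2 ^ p)) :
    parHom (m + (Fintype.card s.carrier + Fintype.card t.carrier))
      (m + (Fintype.card s.carrier + Fintype.card t.carrier)) :=
  prestrict fun x => (P1of s t x).Dom ∧ (R1of s t x).Dom

theorem adapted_comp {n m p : ℕ} (s : SpanRep (2 ^ n) (2 ^ m)) (t : SpanRep (2 ^ m) (2 ^ p)) :
    Adapted (spanRepComp s t) (m + (Fintype.card s.carrier + Fintype.card t.carrier))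
      (pcomp (Eof s t) (P1of s t)) (pcomp (Eof s t) (R1of s t)) := by
  classical
  set A := Fintype.card s.carrier with hA
  set B := Fintype.card t.carrier with hB
  set jf : (spanRepComp s t).carrier → Fin (2 ^ (m + (A + B))) :=
    fun cc => (pow2Equiv m (A + B)).symm
      (s.right cc.1.1, (pow2Equiv A B).symm (sIota s cc.1.1, sIota t cc.1.2)) with hj
  have d1 : ∀ cc, (pow2Equiv m (A + B) (jf cc)).1 = s.right cc.1.1 := by
    intro cc; rw [hj]; simp
  have d2 : ∀ cc, (pow2Equiv A B (pow2Equiv m (A + B) (jf cc)).2).1 = sIota s cc.1.1 := by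
    intro cc; rw [hj]; simp
  have d3 : ∀ cc, (pow2Equiv A B (pow2Equiv m (A + B) (jf cc)).2).2 = sIota t cc.1.2 := by
    intro cc; rw [hj]; simp
  have memP : ∀ cc, s.left cc.1.1 ∈ P1of s t (jf cc) := by
    intro cc
    refine (mem_P1gen (gOf s) (hOf s)).mpr ?_
    rw [d1 cc, d2 cc]
    exact ⟨right_mem_hOf s cc.1.1, left_mem_gOf s cc.1.1⟩
  have memR : ∀ cc, t.right cc.1.2 ∈ R1of s t (jf cc) := by
    intro cc
    refine (mem_R1gen (gOf t) (hOf t)).mpr ?_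
    rw [d1 cc, d3 cc]
    refine ⟨?_, right_mem_hOf t cc.1.2⟩
    rw [cc.2]
    exact left_mem_gOf t cc.1.2
  have domD : ∀ cc, (P1of s t (jf cc)).Dom ∧ (R1of s t (jf cc)).Dom := fun cc =>
    ⟨Part.dom_iff_mem.mpr ⟨_, memP cc⟩, Part.dom_iff_mem.mpr ⟨_, memR cc⟩⟩
  have domdir : ∀ x, ((P1of s t x).Dom ∧ (R1of s t x).Dom) → ∃ cc, jf cc = x := by
    intro x hx
    obtain ⟨hP, hR⟩ := hx
    obtain ⟨y, hy⟩ := Part.dom_iff_mem.mp hP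
    obtain ⟨hu, hyg⟩ := (mem_P1gen (gOf s) (hOf s)).mp hy
    obtain ⟨y', hy'⟩ := Part.dom_iff_mem.mp hR
    obtain ⟨hu', hyh⟩ := (mem_R1gen (gOf t) (hOf t)).mp hy'
    have hdom1 : (hOf s (pow2Equiv A B (pow2Equiv m (A + B) x).2).1).Dom :=
      Part.dom_iff_mem.mpr ⟨_, hu⟩
    obtain ⟨c, hc⟩ := (hdom1 : ∃ c, sIota s c = _)
    have hdom2 : (gOf t (pow2Equiv A B (pow2Equiv m (A + B) x).2).2).Dom :=
      Part.dom_iff_mem.mpr ⟨_, hu'⟩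
    obtain ⟨c', hc'⟩ := (hdom2 : ∃ c', sIota t c' = _)
    have hus : (pow2Equiv m (A + B) x).1 = s.right c := by
      refine Part.mem_unique ?_ (right_mem_hOf s c)
      rw [hc]; exact hu
    have hut : (pow2Equiv m (A + B) x).1 = t.left c' := by
      refine Part.mem_unique ?_ (left_mem_gOf t c')
      rw [hc']; exact hu'
    refine ⟨⟨(c, c'), by rw [← hus, ← hut]⟩, ?_⟩
    show (pow2Equiv m (A + B)).symm
      (s.right c, (pow2Equiv A B).symm (sIota s c, sIota t c')) = x
    rw [← hus, hc, hc']
    simp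
  refine ⟨jf, ?_, ?_, ?_, ?_, ?_⟩
  · intro c1 c2 h
    rw [hj] at h
    have h2 := (pow2Equiv m (A + B)).symm.injective h
    have h3 := (pow2Equiv A B).symm.injective (congrArg Prod.snd h2)
    exact Subtype.ext (Prod.ext (sIota_inj s (congrArg Prod.fst h3))
      (sIota_inj t (congrArg Prod.snd h3)))
  · intro cc
    exact mem_pcomp_prestrict.mpr ⟨domD cc, memP cc⟩
  · intro cc
    exact mem_pcomp_prestrict.mpr ⟨domD cc, memR cc⟩
  · intro x h
    obtain ⟨hD, -⟩ := dom_pcomp_prestrict.mp h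
    exact domdir x hD
  · intro x h
    obtain ⟨hD, -⟩ := dom_pcomp_prestrict.mp h
    exact domdir x hD

section Pushout4

variable {Q : PROP.{w}}
  {F : ∀ a b : ℕ, FPar2opCore.Hom a b → Q.core.Hom a b}
  {G : ∀ a b : ℕ, FPar2Core.Hom a b → Q.core.Hom a b}

variable (hF : IsPROPHom FPar2opCore Q.core F) (hG : IsPROPHom FPar2Core Q.core G)
  (hsq : ∀ (a b : ℕ) (f : FPinj2Core.Hom a b), F a b (jopmap a b f) = G a b (jmap a b f))

include hF hG hsq

theorem Hmap_comp {n m p : ℕ} (σ : FSpan2Core.Hom n m) (τ : FSpan2Core.Hom m p) :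
    Hmap hF hG hsq n p (FSpan2Core.comp σ τ) =
      Q.core.comp (Hmap hF hG hsq n m σ) (Hmap hF hG hsq m p τ) := by
  induction σ using Quot.ind with | _ s => ?_
  induction τ using Quot.ind with | _ t => ?_
  have h1 := Hmap_adapted hF hG hsq (adapted_comp s t)
  have hnorm := normalizeFG hF hG hsq (P1of s t) (R1of s t)
  set A := Fintype.card s.carrier with hA
  set B := Fintype.card t.carrier with hB
  set X : parHom (m + (A + B)) A :=
    pcomp (Wmap m A B) (pinv (pgraph (hOf s))) with hX
  set Y : parHom (m + (A + B)) B :=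
    pcomp (Zmap m A B) (pinv (pgraph (gOf t))) with hY
  have st1 : Q.core.comp (Q.core.comp (F n A (gOf s)) (G A m (hOf s)))
      (Q.core.comp (F m B (gOf t)) (G B p (hOf t))) =
      Q.core.comp (F n A (gOf s)) (Q.core.comp
        (Q.core.comp (G A m (hOf s)) (F m B (gOf t))) (G B p (hOf t))) :=
    (Q.laws.assoc _ _ _).trans (congrArg (Q.core.comp (F n A (gOf s)))
      (Q.laws.assoc _ _ _).symm)
  have st2 : Q.core.comp (F n A (gOf s)) (Q.core.comp
      (Q.core.comp (G A m (hOf s)) (F m B (gOf t))) (G B p (hOf t))) =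
      Q.core.comp (F n A (gOf s)) (Q.core.comp
        (Q.core.comp (F A (m + (A + B)) X) (G (m + (A + B)) B Y)) (G B p (hOf t))) :=
    congrArg (fun z => Q.core.comp (F n A (gOf s)) (Q.core.comp z (G B p (hOf t))))
      (exchangeFG hF hG hsq m A B (hOf s) (gOf t))
  have st3 : Q.core.comp (F n A (gOf s)) (Q.core.comp
      (Q.core.comp (F A (m + (A + B)) X) (G (m + (A + B)) B Y)) (G B p (hOf t))) =
      Q.core.comp (Q.core.comp (F n A (gOf s)) (F A (m + (A + B)) X))
        (Q.core.comp (G (m + (A + B)) B Y) (G B p (hOf t))) :=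
    (congrArg (Q.core.comp (F n A (gOf s))) (Q.laws.assoc _ _ _)).trans
      (Q.laws.assoc _ _ _).symm
  have st4 : Q.core.comp (Q.core.comp (F n A (gOf s)) (F A (m + (A + B)) X))
      (Q.core.comp (G (m + (A + B)) B Y) (G B p (hOf t))) =
      Q.core.comp (F n (m + (A + B)) (P1of s t)) (G (m + (A + B)) p (R1of s t)) :=
    congrArg₂ Q.core.comp (hF.2.1 n A (m + (A + B)) (gOf s) X).symm
      (hG.2.1 (m + (A + B)) B p Y (hOf t)).symm
  exact (h1.trans hnorm.symm).trans ((((st1.trans st2).trans st3).trans st4).symm)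

end Pushout4
theorem span_decomp {n m : ℕ} (s : SpanRep (2 ^ n) (2 ^ m)) :
    spanEqv s (spanRepComp (spanRev (parToSpan (gOf s))) (parToSpan (hOf s))) := by
  classical
  refine ⟨⟨fun c => ⟨(⟨sIota s c, ⟨c, rfl⟩⟩, ⟨sIota s c, ⟨c, rfl⟩⟩), rfl⟩,
    fun pp => Exists.choose (pp.1.1.2 : ∃ c, sIota s c = pp.1.1.1),
    fun c => sIota_inj s (Exists.choose_spec
      ((⟨c, rfl⟩ : ∃ c', sIota s c' = sIota s c))),
    fun pp => Subtype.ext (Prod.ext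
      (Subtype.ext (Exists.choose_spec (pp.1.1.2 : ∃ c, sIota s c = pp.1.1.1)))
      (Subtype.ext ((Exists.choose_spec
        (pp.1.1.2 : ∃ c, sIota s c = pp.1.1.1)).trans pp.2)))⟩,
    fun c => congrArg s.left (sIota_inj s (Exists.choose_spec
      ((⟨c, rfl⟩ : ∃ c', sIota s c' = sIota s c)))),
    fun c => congrArg s.right (sIota_inj s (Exists.choose_spec
      ((⟨c, rfl⟩ : ∃ c', sIota s c' = sIota s c))))⟩

section Pushout5

variable {Q : PROP.{w}}
  {F : ∀ a b : ℕ, FPar2opCore.Hom a b → Q.core.Hom a b}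
  {G : ∀ a b : ℕ, FPar2Core.Hom a b → Q.core.Hom a b}

variable (hF : IsPROPHom FPar2opCore Q.core F) (hG : IsPROPHom FPar2Core Q.core G)
  (hsq : ∀ (a b : ℕ) (f : FPinj2Core.Hom a b), F a b (jopmap a b f) = G a b (jmap a b f))

include hF hG hsq

theorem Hmap_unique (H' : ∀ a b : ℕ, FSpan2Core.Hom a b → Q.core.Hom a b)
    (hH' : IsPROPHom FSpan2Core Q.core H')
    (htF : ∀ (a b : ℕ) (f : FPar2opCore.Hom a b), H' a b (Popmap a b f) = F a b f)
    (htG : ∀ (a b : ℕ) (f : FPar2Core.Hom a b), H' a b (Pmap a b f) = G a b f) :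
    H' = Hmap hF hG hsq := by
  funext a b σ
  induction σ using Quot.ind with | _ s => ?_
  have hdec : (Quot.mk spanEqv s : FSpan2Core.Hom a b) =
      FSpan2Core.comp (Popmap a (Fintype.card s.carrier) (gOf s))
        (Pmap (Fintype.card s.carrier) b (hOf s)) := Quot.sound (span_decomp s)
  calc H' a b (Quot.mk spanEqv s)
      = H' a b (FSpan2Core.comp (Popmap a (Fintype.card s.carrier) (gOf s))
          (Pmap (Fintype.card s.carrier) b (hOf s))) := congrArg (H' a b) hdec
    _ = Q.core.comp (H' a (Fintype.card s.carrier)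
          (Popmap a (Fintype.card s.carrier) (gOf s)))
          (H' (Fintype.card s.carrier) b (Pmap (Fintype.card s.carrier) b (hOf s))) :=
        hH'.2.1 a (Fintype.card s.carrier) b _ _
    _ = Q.core.comp (F a (Fintype.card s.carrier) (gOf s))
          (G (Fintype.card s.carrier) b (hOf s)) :=
        congrArg₂ Q.core.comp (htF a (Fintype.card s.carrier) (gOf s))
          (htG (Fintype.card s.carrier) b (hOf s))
    _ = Hmap hF hG hsq a b (Quot.mk spanEqv s) :=
        (Hmap_adapted hF hG hsq (adapted_gOf s)).symm

end Pushout5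

/-- with `j : FPinj₂ → FPar₂` the inclusion,
`j° : FPinj₂ → FPar₂^op` the partial-inverse map, and `P : FPar₂ → FSpan₂`,
`P° : FPar₂^op → FSpan₂` sending a partial function to (the class of) its
span of definition, resp. the reversed such span: `P` and `P°` are prop
morphisms, the square commutes (`j°;P° = j;P`), and the square is a pushout
in the category of props: for every prop `Q` and prop morphisms
`F : FPar₂^op → Q`, `G : FPar₂ → Q` with `j°;F = j;G` there is a unique prop
morphism `H : FSpan₂ → Q` with `P°;H = F` and `P;H = G`. -/
theorem fspan_pushout :
    IsPROPHom FPinj2Core FPar2Core jmap ∧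
    IsPROPHom FPinj2Core FPar2opCore jopmap ∧
    IsPROPHom FPar2Core FSpan2Core Pmap ∧
    IsPROPHom FPar2opCore FSpan2Core Popmap ∧
    (∀ (a b : ℕ) (f : FPinj2Core.Hom a b), Popmap a b (jopmap a b f) = Pmap a b (jmap a b f)) ∧
    (∀ (Q : PROP.{w}) (F : ∀ a b : ℕ, FPar2opCore.Hom a b → Q.core.Hom a b)
        (G : ∀ a b : ℕ, FPar2Core.Hom a b → Q.core.Hom a b),
      IsPROPHom FPar2opCore Q.core F → IsPROPHom FPar2Core Q.core G →
      (∀ (a b : ℕ) (f : FPinj2Core.Hom a b), F a b (jopmap a b f) = G a b (jmap a b f)) →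
      ∃! H : ∀ a b : ℕ, FSpan2Core.Hom a b → Q.core.Hom a b,
        IsPROPHom FSpan2Core Q.core H ∧
        (∀ (a b : ℕ) (f : FPar2opCore.Hom a b), H a b (Popmap a b f) = F a b f) ∧
        (∀ (a b : ℕ) (f : FPar2Core.Hom a b), H a b (Pmap a b f) = G a b f)) := by
  refine ⟨jmap_hom, jopmap_hom, Pmap_hom, Popmap_hom, square_comm, ?_⟩
  intro Q F G hF hG hsq
  refine ⟨Hmap hF hG hsq, ⟨⟨Hmap_id hF hG hsq, fun a b c f g => Hmap_comp hF hG hsq f g,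
    fun a b c d f g => Hmap_tensor hF hG hsq f g, Hmap_swap hF hG hsq⟩,
    Hmap_triangle_F hF hG hsq, Hmap_triangle_G hF hG hsq⟩, ?_⟩
  intro H' hH'
  exact Hmap_unique hF hG hsq H' hH'.1 hH'.2.1 hH'.2.2
end

section
/- Let Span_fin be the monoidal category whose objects are natural numbers, whose morphisms n → m are isomorphism classes of spans Fin n ← γ → Fin m with γ a finite type (two spans identified when a bijection of apices commutes with both legs), with composition by pullback, identities the identity spans, tensor n ⊗ m := n·m on objects, and tensor of morphisms the cartesian product of spans transported along the bijections Fin(n·m) ≅ Fin n × Fin m. Let Mat_ℕ be the monoidal category whose objects are natural numbers, whose morphisms n → m are the matrices over ℕ indexed by Fin n × Fin m, with composition matrix multiplication, tensor n ⊗ m := n·m on objects, and tensor of morphisms the Kronecker product. Then the assignment sending the class of a span (f : γ → Fin n, g : γ → Fin m) to its counting matrix (with (i, j) entry the cardinality of {c : γ | f(c) = i ∧ g(c) = j}) is well defined and is a monoidal equivalence — indeed an identity-on-objects isomorphism of monoidal categories — from Span_fin to Mat_ℕ. -/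
/-- The tensor (cartesian product) of spans, on objects `n ⊗ m = n * m`,
transported along `Fin n × Fin n' ≃ Fin (n * n')`. -/
def spanRepMul {n m n' m' : ℕ} (s : SpanRep n m) (t : SpanRep n' m') :
    SpanRep (n * n') (m * m') where
  carrier := s.carrier × t.carrier
  left p := finProdFinEquiv (s.left p.1, t.left p.2)
  right p := finProdFinEquiv (s.right p.1, t.right p.2)

theorem spanEqv_mul_left {n m n' m' : ℕ} {s s' : SpanRep n m} (t : SpanRep n' m')
    (h : spanEqv s s') : spanEqv (spanRepMul s t) (spanRepMul s' t) := by
  obtain ⟨e, hl, hr⟩ := h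
  refine ⟨e.prodCongr (Equiv.refl t.carrier), fun p => ?_, fun p => ?_⟩
  · show finProdFinEquiv (s'.left (e p.1), t.left p.2) = _
    rw [hl p.1]; rfl
  · show finProdFinEquiv (s'.right (e p.1), t.right p.2) = _
    rw [hr p.1]; rfl

theorem spanEqv_mul_right {n m n' m' : ℕ} (s : SpanRep n m) {t t' : SpanRep n' m'}
    (h : spanEqv t t') : spanEqv (spanRepMul s t) (spanRepMul s t') := by
  obtain ⟨e, hl, hr⟩ := h
  refine ⟨(Equiv.refl s.carrier).prodCongr e, fun p => ?_, fun p => ?_⟩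
  · show finProdFinEquiv (s.left p.1, t'.left (e p.2)) = _
    rw [hl p.2]; rfl
  · show finProdFinEquiv (s.right p.1, t'.right (e p.2)) = _
    rw [hr p.2]; rfl

/-- The tensor descends to isomorphism classes of spans. -/
def spanMul {n m n' m' : ℕ} : SpanHom n m → SpanHom n' m' → SpanHom (n * n') (m * m') :=
  Quot.lift₂ (fun s t => sMk (spanRepMul s t))
    (fun s _ _ h => Quot.sound (spanEqv_mul_right s h))
    (fun _ _ t h => Quot.sound (spanEqv_mul_left t h))

/-- The counting matrix of a span. -/
noncomputable def countMatrix {n m : ℕ} (s : SpanRep n m) : Matrix (Fin n) (Fin m) ℕ :=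
  Matrix.of fun i j => Nat.card {c : s.carrier // s.left c = i ∧ s.right c = j}


theorem countMatrix_eqv {n m : ℕ} {s t : SpanRep n m} (h : spanEqv s t) :
    countMatrix s = countMatrix t := by
  obtain ⟨e, hl, hr⟩ := h
  ext i j
  exact Nat.card_congr (Equiv.subtypeEquiv e fun c => by rw [hl, hr])

/-- Fiber of the first projection of a sigma type. -/
def sigmaFiber {ι : Type*} (F : ι → Type*) (a : ι) : {x : Sigma F // x.1 = a} ≃ F a where
  toFun x := x.2 ▸ x.1.2
  invFun y := ⟨⟨a, y⟩, rfl⟩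
  left_inv := by rintro ⟨⟨i, y⟩, rfl⟩; rfl
  right_inv y := rfl

/-- Canonical span with a given counting matrix. -/
noncomputable def canonSpan {n m : ℕ} (M : Matrix (Fin n) (Fin m) ℕ) : SpanRep n m where
  carrier := Σ p : Fin n × Fin m, Fin (M p.1 p.2)
  left x := x.1.1
  right x := x.1.2

theorem countMatrix_canonSpan {n m : ℕ} (M : Matrix (Fin n) (Fin m) ℕ) :
    countMatrix (canonSpan M) = M := by
  ext i j
  show Nat.card {x : Σ p : Fin n × Fin m, Fin (M p.1 p.2) // x.1.1 = i ∧ x.1.2 = j} = M i j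
  have e : {x : Σ p : Fin n × Fin m, Fin (M p.1 p.2) // x.1.1 = i ∧ x.1.2 = j} ≃
      Fin (M i j) :=
    (Equiv.subtypeEquivRight (fun x => by
        constructor
        · rintro ⟨h1, h2⟩; exact Prod.ext h1 h2
        · rintro h; exact ⟨congrArg Prod.fst h, congrArg Prod.snd h⟩)).trans
      (sigmaFiber (fun p : Fin n × Fin m => Fin (M p.1 p.2)) (i, j))
  exact (Nat.card_congr e).trans (by simp)

theorem spanEqv_canon {n m : ℕ} (s : SpanRep n m) : spanEqv s (canonSpan (countMatrix s)) := by
  classical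
  refine ⟨((Equiv.sigmaFiberEquiv (fun c : s.carrier => (s.left c, s.right c))).symm.trans
    (Equiv.sigmaCongrRight fun p => ?_)), fun c => rfl, fun c => rfl⟩
  refine ((Equiv.subtypeEquivRight fun c => Prod.ext_iff).trans
    (Fintype.equivFinOfCardEq ?_))
  show _ = countMatrix s p.1 p.2
  rw [countMatrix, Matrix.of_apply, Nat.card_eq_fintype_card]

theorem countMatrix_id (n : ℕ) : countMatrix (spanRepId n) = 1 := by
  classical
  ext i j
  show Nat.card {c : Fin n // c = i ∧ c = j} = _
  rcases eq_or_ne i j with rfl | h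
  · rw [Matrix.one_apply_eq]
    exact Nat.card_eq_one_iff_unique.mpr
      ⟨⟨fun a b => Subtype.ext (a.2.1.trans b.2.1.symm)⟩, ⟨⟨i, rfl, rfl⟩⟩⟩
  · rw [Matrix.one_apply_ne h, Nat.card_eq_zero]
    exact Or.inl ⟨fun x => h (x.2.1.symm.trans x.2.2)⟩

/-- The fiber of a pullback decomposes as a sigma of products of fibers. -/
def compFiberEquiv {n m k : ℕ} (s : SpanRep n m) (t : SpanRep m k) (i : Fin n) (k' : Fin k) :
    {q : (spanRepComp s t).carrier // (spanRepComp s t).left q = i ∧ (spanRepComp s t).right q = k'}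
      ≃ Σ j : Fin m, {c : s.carrier // s.left c = i ∧ s.right c = j} ×
        {c' : t.carrier // t.left c' = j ∧ t.right c' = k'} where
  toFun q := ⟨s.right q.1.1.1, ⟨q.1.1.1, q.2.1, rfl⟩, ⟨q.1.1.2, q.1.2.symm, q.2.2⟩⟩
  invFun x := ⟨⟨(x.2.1.1, x.2.2.1), x.2.1.2.2.trans x.2.2.2.1.symm⟩, x.2.1.2.1, x.2.2.2.2⟩
  left_inv q := rfl
  right_inv := by rintro ⟨j, ⟨c, hc1, rfl⟩, ⟨c', hc'⟩⟩; rfl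

theorem countMatrix_comp {n m k : ℕ} (s : SpanRep n m) (t : SpanRep m k) :
    countMatrix (spanRepComp s t) = countMatrix s * countMatrix t := by
  classical
  ext i k'
  rw [Matrix.mul_apply]
  show Nat.card _ = _
  rw [Nat.card_congr (compFiberEquiv s t i k'), Nat.card_eq_fintype_card, Fintype.card_sigma]
  refine Finset.sum_congr rfl fun j _ => ?_
  rw [Fintype.card_prod, countMatrix, countMatrix, Matrix.of_apply, Matrix.of_apply,
    Nat.card_eq_fintype_card, Nat.card_eq_fintype_card]

theorem countMatrix_mul {n m n' m' : ℕ} (s : SpanRep n m) (t : SpanRep n' m') :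
    countMatrix (spanRepMul s t) =
      Matrix.reindex finProdFinEquiv finProdFinEquiv
        (Matrix.kroneckerMap (· * ·) (countMatrix s) (countMatrix t)) := by
  classical
  ext a b
  rw [Matrix.reindex_apply, Matrix.submatrix_apply, Matrix.kroneckerMap_apply]
  show Nat.card _ = countMatrix s _ _ * countMatrix t _ _
  rw [countMatrix, countMatrix, Matrix.of_apply, Matrix.of_apply, ← Nat.card_prod]
  refine Nat.card_congr ((Equiv.subtypeEquivRight fun p => ?_).trans
    Equiv.subtypeProdEquivProd)
  show (finProdFinEquiv (s.left p.1, t.left p.2) = a ∧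
      finProdFinEquiv (s.right p.1, t.right p.2) = b) ↔ _
  rw [Equiv.apply_eq_iff_eq_symm_apply, Equiv.apply_eq_iff_eq_symm_apply,
    Prod.ext_iff, Prod.ext_iff]
  tauto

/-- sending the class of a span to its counting matrix is a
well-defined, identity-on-objects monoidal isomorphism (in particular a
monoidal equivalence) from the monoidal category of isomorphism classes of
spans of finite types between the `Fin n` (composition by pullback, tensor
the cartesian product over `n ⊗ m = n·m`) to the monoidal category of
ℕ-matrices (composition matrix multiplication, tensor the Kronecker
product). -/
theorem span_fin_iso_mat_nat :
    ∃ Φ : ∀ n m : ℕ, SpanHom n m → Matrix (Fin n) (Fin m) ℕ,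
      -- Φ is well defined and computed by the counting matrix
      (∀ (n m : ℕ) (s : SpanRep n m), Φ n m (sMk s) = countMatrix s) ∧
      -- Φ is an (identity-on-objects) functor
      (∀ n : ℕ, Φ n n (sMk (spanRepId n)) = 1) ∧
      (∀ (n m k : ℕ) (F : SpanHom n m) (G : SpanHom m k),
        Φ n k (spanComp F G) = Φ n m F * Φ m k G) ∧
      -- Φ is monoidal: pullback tensor goes to the Kronecker product
      (∀ (n m n' m' : ℕ) (F : SpanHom n m) (G : SpanHom n' m'),
        Φ (n * n') (m * m') (spanMul F G) =
          Matrix.reindex finProdFinEquiv finProdFinEquiv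
            (Matrix.kroneckerMap (· * ·) (Φ n m F) (Φ n' m' G))) ∧
      -- Φ is an isomorphism on each hom-set
      (∀ n m : ℕ, Function.Bijective (Φ n m)) := by
  classical
  refine ⟨fun n m => Quot.lift countMatrix (fun _ _ h => countMatrix_eqv h),
    fun n m s => rfl, fun n => countMatrix_id n, ?_, ?_, fun n m => ⟨?_, ?_⟩⟩
  · intro n m k F G
    induction F using Quot.ind
    induction G using Quot.ind
    exact countMatrix_comp _ _
  · intro n m n' m' F G
    induction F using Quot.ind
    induction G using Quot.ind
    exact countMatrix_mul _ _
  · intro F G h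
    induction F using Quot.ind with | _ s => ?_
    induction G using Quot.ind with | _ t => ?_
    have hs := spanEqv_canon s
    have ht := spanEqv_canon t
    have : countMatrix s = countMatrix t := h
    calc sMk s = sMk (canonSpan (countMatrix s)) := Quot.sound hs
      _ = sMk (canonSpan (countMatrix t)) := by rw [this]
      _ = sMk t := (Quot.sound ht).symm
  · intro M
    exact ⟨sMk (canonSpan M), countMatrix_canonSpan M⟩
end
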